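/- arXiv:1604.07021 — 2 statements merged into one kernel-verified Lean document; each statement's English description precedes it below -/
import Mathlib

section
/- Suppose Γ is an E-complete maximally tableau FOLP_CS-consistent set of closed Par-formulas, and let E be defined by E(t) = { A : ¬t:_{Par(A)} A ∉ Γ }. Then E satisfies condition E2: if A ∈ E(t) and A→B ∈ E(s), then B ∈ E(s·t). -/
open scoped Classical

/-- Justification terms of FOLP, built from justification variables `jvar i`,
justification constants `jconst i`, and the operations `+`, `·`, `!`, `genₓ`. -/
inductive Tm : Type
  | jvar : ℕ → Tm
  | jconst : ℕ → Tm
  | plus : Tm → Tm → Tm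
  | app : Tm → Tm → Tm
  | bang : Tm → Tm
  | gen : ℕ → Tm → Tm
  deriving DecidableEq

/-- FOLP formulas with extra individual constants from `K` (`K`-formulas).
Individual variables are natural numbers; an argument `Sum.inl x` is an individual
variable, `Sum.inr a` is an element of `K`.  Predicate symbols are indexed by `ℕ`.
Plain FOLP formulas are `Fm Empty`, Par-formulas are `Fm ℕ` (the parameters being a
separate copy of ℕ, namely the `Sum.inr` part), and `D`-formulas are `Fm D`.
`just t X A` is the justification assertion `t :_X A`. -/
inductive Fm (K : Type) : Type
  | pred : ℕ → List (ℕ ⊕ K) → Fm K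
  | neg : Fm K → Fm K
  | imp : Fm K → Fm K → Fm K
  | all : ℕ → Fm K → Fm K
  | ex : ℕ → Fm K → Fm K
  | just : Tm → Finset (ℕ ⊕ K) → Fm K → Fm K

namespace Fm

variable {K K' : Type}

/-- Free individual variables of a `K`-formula.  Recall that
`FVar (t :_X A) = X` (more precisely, the individual-variable part of `X`). -/
noncomputable def fvar : Fm K → Finset ℕ
  | pred _ args => (args.filterMap Sum.getLeft?).toFinset
  | neg A => A.fvar
  | imp A B => A.fvar ∪ B.fvar
  | all x A => A.fvar.erase x
  | ex x A => A.fvar.erase x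
  | just _ X _ => (X.toList.filterMap Sum.getLeft?).toFinset

/-- The elements of `K` occurring in a `K`-formula (for `K = Par` this is `Par(A)`,
for `K = D` this is `D(A)`). -/
noncomputable def kocc : Fm K → Finset K
  | pred _ args => (args.filterMap Sum.getRight?).toFinset
  | neg A => A.kocc
  | imp A B => A.kocc ∪ B.kocc
  | all _ A => A.kocc
  | ex _ A => A.kocc
  | just _ X A => A.kocc ∪ (X.toList.filterMap Sum.getRight?).toFinset

/-- A `K`-formula is closed if it contains no free occurrences of individual variables. -/
def Closed (A : Fm K) : Prop := A.fvar = ∅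

/-- Action of a partial substitution (of elements of `K` for individual variables)
on variables/`K`-elements. -/
def subK (σ : ℕ → Option K) : ℕ ⊕ K → ℕ ⊕ K
  | .inl x => (σ x).elim (.inl x) .inr
  | .inr a => .inr a

/-- Simultaneous substitution of elements of `K` for free individual variables.
In `t :_X A` only the variables belonging to `X` are free, so only those get
substituted (both inside `X` and inside `A`). -/
noncomputable def msubst (σ : ℕ → Option K) : Fm K → Fm K
  | pred Q args => pred Q (args.map (subK σ))
  | neg A => neg (A.msubst σ)
  | imp A B => imp (A.msubst σ) (B.msubst σ)
  | all x A => all x (A.msubst fun y => if y = x then none else σ y)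
  | ex x A => ex x (A.msubst fun y => if y = x then none else σ y)
  | just t X A =>
      just t (X.image (subK σ)) (A.msubst fun y => if Sum.inl y ∈ X then σ y else none)

/-- `A.subst1 x a` is `A(a)`, i.e. `A{x/a}`: the result of replacing all free
occurrences of the individual variable `x` by the element `a : K`. -/
noncomputable def subst1 (x : ℕ) (a : K) (A : Fm K) : Fm K :=
  A.msubst fun y => if y = x then some a else none

/-- Action of a variable-for-variable substitution on arguments. -/
def subVV (x y : ℕ) : ℕ ⊕ K → ℕ ⊕ K
  | .inl z => if z = x then .inl y else .inl z
  | .inr a => .inr a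

/-- `A.vsubst x y` is `A{x/y}`: substitution of the individual variable `y` for
the free occurrences of the individual variable `x`. -/
noncomputable def vsubst (x y : ℕ) : Fm K → Fm K
  | pred Q args => pred Q (args.map (subVV x y))
  | neg A => neg (A.vsubst x y)
  | imp A B => imp (A.vsubst x y) (B.vsubst x y)
  | all z A => if z = x then all z A else all z (A.vsubst x y)
  | ex z A => if z = x then ex z A else ex z (A.vsubst x y)
  | just t X A =>
      if Sum.inl x ∈ X then just t (X.image (subVV x y)) (A.vsubst x y) else just t X A

/-- `FreeFor y x A`: the variable `y` is substitutable for the variable `x` in `A`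
(no free occurrence of `x` lies in the scope of a quantifier binding `y`). -/
def FreeFor (y x : ℕ) : Fm K → Prop
  | pred _ _ => True
  | neg A => FreeFor y x A
  | imp A B => FreeFor y x A ∧ FreeFor y x B
  | all z A => x = z ∨ x ∉ A.fvar ∨ (y ≠ z ∧ FreeFor y x A)
  | ex z A => x = z ∨ x ∉ A.fvar ∨ (y ≠ z ∧ FreeFor y x A)
  | just _ X A => Sum.inl x ∈ X → FreeFor y x A

/-- Action of a renaming on arguments. -/
def subR (σ : ℕ → ℕ) : ℕ ⊕ K → ℕ ⊕ K
  | .inl x => .inl (σ x)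
  | .inr a => .inr a

/-- Renaming of all (free and bound) individual variables. -/
noncomputable def rename (σ : ℕ → ℕ) : Fm K → Fm K
  | pred Q args => pred Q (args.map (subR σ))
  | neg A => neg (A.rename σ)
  | imp A B => imp (A.rename σ) (B.rename σ)
  | all x A => all (σ x) (A.rename σ)
  | ex x A => ex (σ x) (A.rename σ)
  | just t X A => just t (X.image (subR σ)) (A.rename σ)

/-- Mapping the extra individual constants of a `K`-formula along `f : K → K'`. -/
noncomputable def kmap (f : K → K') : Fm K → Fm K'
  | pred Q args => pred Q (args.map (Sum.map id f))
  | neg A => neg (A.kmap f)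
  | imp A B => imp (A.kmap f) (B.kmap f)
  | all x A => all x (A.kmap f)
  | ex x A => ex x (A.kmap f)
  | just t X A => just t (X.image (Sum.map id f)) (A.kmap f)

/-- A size measure used for the well-founded recursion defining truth. -/
noncomputable def size : Fm K → ℕ
  | pred _ _ => 0
  | neg A => A.size + 1
  | imp A B => A.size + B.size + 1
  | all _ A => A.size + 1
  | ex _ A => A.size + 1
  | just _ _ A => A.size + A.fvar.card + 1


theorem fvar_msubst_subset (σ : ℕ → Option K) (A : Fm K) :
    (A.msubst σ).fvar ⊆ A.fvar := by
  induction A generalizing σ with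
  | pred Q args =>
      intro y hy
      simp only [msubst, fvar, List.mem_toFinset, List.mem_filterMap, List.mem_map] at hy ⊢
      obtain ⟨s, ⟨a, ha, rfl⟩, hget⟩ := hy
      cases a with
      | inl z =>
          cases hσ : σ z with
          | none =>
              simp [subK, hσ] at hget
              exact ⟨Sum.inl z, ha, by simp [hget]⟩
          | some b => simp [subK, hσ] at hget
      | inr b => simp [subK] at hget
  | neg A ih => exact ih σ
  | imp A B ihA ihB =>
      simp only [msubst, fvar]
      exact Finset.union_subset_union (ihA σ) (ihB σ)
  | all x A ih =>
      simp only [msubst, fvar]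
      exact Finset.erase_subset_erase x (ih _)
  | ex x A ih =>
      simp only [msubst, fvar]
      exact Finset.erase_subset_erase x (ih _)
  | just t X A ih =>
      intro y hy
      simp only [msubst, fvar, List.mem_toFinset, List.mem_filterMap,
        Finset.mem_toList, Finset.mem_image] at hy ⊢
      obtain ⟨s, ⟨a, ha, rfl⟩, hget⟩ := hy
      cases a with
      | inl z =>
          cases hσ : σ z with
          | none =>
              refine ⟨Sum.inl z, ha, ?_⟩
              simp only [subK, hσ, Option.elim] at hget
              simpa using hget
          | some b => simp [subK, hσ] at hget
      | inr b => simp [subK] at hget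

theorem size_msubst_le (σ : ℕ → Option K) (A : Fm K) :
    (A.msubst σ).size ≤ A.size := by
  induction A generalizing σ with
  | pred Q args => simp [msubst, size]
  | neg A ih => simpa [msubst, size] using ih σ
  | imp A B ihA ihB =>
      simp only [msubst, size]
      have := ihA σ; have := ihB σ; omega
  | all x A ih => simpa [msubst, size] using ih _
  | ex x A ih => simpa [msubst, size] using ih _
  | just t X A ih =>
      simp only [msubst, size]
      have h1 := ih (fun y => if Sum.inl y ∈ X then σ y else none)
      have h2 := Finset.card_le_card
        (fvar_msubst_subset (fun y => if Sum.inl y ∈ X then σ y else none) A)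
      omega

theorem size_subst1_le (x : ℕ) (a : K) (A : Fm K) : (A.subst1 x a).size ≤ A.size :=
  size_msubst_le _ A


/-- `∀A`, the universal closure of `A`. -/
noncomputable def univClosure (A : Fm K) : Fm K :=
  (A.fvar.sort (· ≤ ·)).foldr Fm.all A

theorem size_foldr_all (l : List ℕ) (A : Fm K) :
    (l.foldr Fm.all A).size = A.size + l.length := by
  induction l with
  | nil => simp
  | cons z l ih => simp only [List.foldr, size, ih, List.length_cons]; omega

theorem size_univClosure (A : Fm K) :
    A.univClosure.size = A.size + A.fvar.card := by
  simp [univClosure, size_foldr_all, Finset.length_sort]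

end Fm

/-- Embedding plain FOLP formulas into `K`-formulas. -/
noncomputable def toK {K : Type} : Fm Empty → Fm K := Fm.kmap (fun a => a.elim)

/-- Two FOLP formulas are variable variants if each can be turned into the other
by a renaming of free and bound individual variables. -/
def VariableVariant (A B : Fm Empty) : Prop := ∃ σ : Equiv.Perm ℕ, B = A.rename σ

/-- The axioms of FOLP: a complete list of first order axiom schemes together
with the justification axiom schemes Ctr, Exp, Sum, jK, jT, j4, Gen. -/
inductive FOLPAxiom : Fm Empty → Prop
  | p1 (A B : Fm Empty) : FOLPAxiom (A.imp (B.imp A))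
  | p2 (A B C : Fm Empty) : FOLPAxiom ((A.imp (B.imp C)).imp ((A.imp B).imp (A.imp C)))
  | p3 (A B : Fm Empty) : FOLPAxiom (((A.neg).imp (B.neg)).imp (B.imp A))
  | allElim (x y : ℕ) (A : Fm Empty) : Fm.FreeFor y x A → FOLPAxiom ((Fm.all x A).imp (A.vsubst x y))
  | allImp (x : ℕ) (A B : Fm Empty) : x ∉ A.fvar →
      FOLPAxiom ((Fm.all x (A.imp B)).imp (A.imp (Fm.all x B)))
  | exIntro (x y : ℕ) (A : Fm Empty) : Fm.FreeFor y x A → FOLPAxiom ((A.vsubst x y).imp (Fm.ex x A))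
  | exElim (x : ℕ) (A B : Fm Empty) : x ∉ B.fvar →
      FOLPAxiom ((Fm.all x (A.imp B)).imp ((Fm.ex x A).imp B))
  | ctr (t : Tm) (X : Finset (ℕ ⊕ Empty)) (A : Fm Empty) (y : ℕ) : Sum.inl y ∉ X → y ∉ A.fvar →
      FOLPAxiom ((Fm.just t (insert (Sum.inl y) X) A).imp (Fm.just t X A))
  | exp (t : Tm) (X : Finset (ℕ ⊕ Empty)) (A : Fm Empty) (y : ℕ) : Sum.inl y ∉ X →
      FOLPAxiom ((Fm.just t X A).imp (Fm.just t (insert (Sum.inl y) X) A))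
  | sum1 (s t : Tm) (X : Finset (ℕ ⊕ Empty)) (A : Fm Empty) : FOLPAxiom ((Fm.just s X A).imp (Fm.just (Tm.plus s t) X A))
  | sum2 (s t : Tm) (X : Finset (ℕ ⊕ Empty)) (A : Fm Empty) : FOLPAxiom ((Fm.just s X A).imp (Fm.just (Tm.plus t s) X A))
  | jK (s t : Tm) (X : Finset (ℕ ⊕ Empty)) (A B : Fm Empty) : FOLPAxiom ((Fm.just s X (A.imp B)).imp
      ((Fm.just t X A).imp (Fm.just (Tm.app s t) X B)))
  | jT (t : Tm) (X : Finset (ℕ ⊕ Empty)) (A : Fm Empty) : FOLPAxiom ((Fm.just t X A).imp A)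
  | j4 (t : Tm) (X : Finset (ℕ ⊕ Empty)) (A : Fm Empty) : FOLPAxiom ((Fm.just t X A).imp (Fm.just (Tm.bang t) X (Fm.just t X A)))
  | gen (t : Tm) (X : Finset (ℕ ⊕ Empty)) (A : Fm Empty) (x : ℕ) : Sum.inl x ∉ X →
      FOLPAxiom ((Fm.just t X A).imp (Fm.just (Tm.gen x t) X (Fm.all x A)))

/-- A constant specification is a set of pairs `(c, A)`, read `c : A`
(that is, `c :_∅ A`), where `A` is an axiom instance. -/
def ConstantSpec (CS : Set (ℕ × Fm Empty)) : Prop := ∀ p ∈ CS, FOLPAxiom p.2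

/-- `CS` is axiomatically appropriate: every axiom instance has a constant justifying it. -/
def AxiomaticallyAppropriate (CS : Set (ℕ × Fm Empty)) : Prop :=
  ∀ A, FOLPAxiom A → ∃ c, (c, A) ∈ CS

/-- `CS` is variant closed. -/
def VariantClosed (CS : Set (ℕ × Fm Empty)) : Prop :=
  ∀ c A B, VariableVariant A B → ((c, A) ∈ CS ↔ (c, B) ∈ CS)

/-- Derivability in the axiomatic system `FOLP_CS`:  axioms, axiom necessitation
restricted to `CS`, modus ponens, and universal generalization. -/
inductive Deriv (CS : Set (ℕ × Fm Empty)) : Fm Empty → Prop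
  | ax {A : Fm Empty} : FOLPAxiom A → Deriv CS A
  | an {c : ℕ} {A : Fm Empty} : (c, A) ∈ CS → Deriv CS (Fm.just (Tm.jconst c) ∅ A)
  | mp {A B : Fm Empty} : Deriv CS (A.imp B) → Deriv CS A → Deriv CS B
  | ug {A : Fm Empty} (x : ℕ) : Deriv CS A → Deriv CS (Fm.all x A)

/-- A Mkrtychev model of `FOLP_CS` with domain `D`:  an interpretation `I` of the
predicate symbols and an admissible evidence function `E` satisfying E1–E6. -/
structure MModel (CS : Set (ℕ × Fm Empty)) (D : Type) : Type where
  dom_nonempty : Nonempty D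
  I : ℕ → Set (List D)
  E : Tm → Set (Fm D)
  e1 : ∀ c A, (c, A) ∈ CS → toK A ∈ E (Tm.jconst c)
  e2 : ∀ s t (A B : Fm D), Fm.imp A B ∈ E s → A ∈ E t → B ∈ E (Tm.app s t)
  e3 : ∀ s t, E s ∪ E t ⊆ E (Tm.plus s t)
  e4 : ∀ t (A : Fm D) (X : Finset D), A ∈ E t → A.kocc ⊆ X →
      Fm.just t (X.image Sum.inr) A ∈ E (Tm.bang t)
  e5 : ∀ t (x : ℕ) (A : Fm D), A ∈ E t → Fm.all x A ∈ E (Tm.gen x t)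
  e6 : ∀ t (A : Fm D) (x : ℕ) (a : D), A ∈ E t → A.subst1 x a ∈ E t

/-- Truth of a (closed) `D`-formula in a Mkrtychev model. -/
noncomputable def MModel.Sat {CS : Set (ℕ × Fm Empty)} {D : Type} (M : MModel CS D) :
    Fm D → Prop
  | .pred Q args => ∃ as : List D, args = as.map Sum.inr ∧ as ∈ M.I Q
  | .neg A => ¬ M.Sat A
  | .imp A B => M.Sat A → M.Sat B
  | .all x A => ∀ a : D, M.Sat (A.subst1 x a)
  | .ex x A => ∃ a : D, M.Sat (A.subst1 x a)
  | .just t _ A => A ∈ M.E t ∧ M.Sat A.univClosure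
  termination_by F => F.size
  decreasing_by
    all_goals simp only [Fm.size, Fm.size_univClosure]
    all_goals first
      | omega
      | exact Nat.lt_succ_of_le (Fm.size_subst1_le _ _ _)

/-- Truth of an FOLP sentence in a Mkrtychev model. -/
noncomputable def MModel.SatSentence {CS : Set (ℕ × Fm Empty)} {D : Type}
    (M : MModel CS D) (F : Fm Empty) : Prop := M.Sat (toK F)

/-- A sentence is `FOLP_CS`-valid if it is true in every Mkrtychev model of `FOLP_CS`. -/
def FOLPValid (CS : Set (ℕ × Fm Empty)) (F : Fm Empty) : Prop :=
  ∀ (D : Type) (M : MModel CS D), M.SatSentence F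

/-- Satisfiability of a closed Par-formula `A(u₁,…,uₙ)` in a model:
`M ⊩ A(a₁,…,aₙ)` for some `a₁,…,aₙ ∈ D`. -/
noncomputable def MModel.SatPar {CS : Set (ℕ × Fm Empty)} {D : Type}
    (M : MModel CS D) (F : Fm ℕ) : Prop :=
  ∃ g : ℕ → D, M.Sat (F.kmap g)

/-- `X ⊆ Par`: the set `X` consists of parameters only. -/
def XPar (X : Finset (ℕ ⊕ ℕ)) : Prop := ∀ s ∈ X, ∃ u : ℕ, s = Sum.inr u

/-- One application of an FOLP tableau rule to a branch (represented by the set `S`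
of closed Par-formulas occurring on it), producing the list of extended branches
(one branch for a non-branching rule, two for a branching rule). -/
inductive TabRule : Set (Fm ℕ) → List (Set (Fm ℕ)) → Prop
  | fneg {S A} : Fm.neg (Fm.neg A) ∈ S → TabRule S [insert A S]
  | timp {S A B} : Fm.imp A B ∈ S → TabRule S [insert (Fm.neg A) S, insert B S]
  | fimp {S A B} : Fm.neg (Fm.imp A B) ∈ S → TabRule S [insert A (insert (Fm.neg B) S)]
  | tall {S x A} (u : ℕ) : Fm.all x A ∈ S → TabRule S [insert (A.subst1 x u) S]
  | fex {S x A} (u : ℕ) : Fm.neg (Fm.ex x A) ∈ S →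
      TabRule S [insert (Fm.neg (A.subst1 x u)) S]
  | tex {S x A} (u : ℕ) : Fm.ex x A ∈ S → (∀ F ∈ S, u ∉ F.kocc) →
      TabRule S [insert (A.subst1 x u) S]
  | fall {S x A} (u : ℕ) : Fm.neg (Fm.all x A) ∈ S → (∀ F ∈ S, u ∉ F.kocc) →
      TabRule S [insert (Fm.neg (A.subst1 x u)) S]
  | tcolon {S t X A} : Fm.just t X A ∈ S → XPar X → TabRule S [insert A.univClosure S]
  | fplus {S t s X A} : Fm.neg (Fm.just (Tm.plus t s) X A) ∈ S → XPar X →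
      TabRule S [insert (Fm.neg (Fm.just t X A)) (insert (Fm.neg (Fm.just s X A)) S)]
  | fapp {S s t X B} (A : Fm ℕ) : Fm.neg (Fm.just (Tm.app s t) X B) ∈ S → XPar X →
      (∀ u ∈ A.kocc, Sum.inr u ∈ X) →
      TabRule S [insert (Fm.neg (Fm.just s X (A.imp B))) S,
                 insert (Fm.neg (Fm.just t X A)) S]
  | fbang {S t X A} : Fm.neg (Fm.just (Tm.bang t) X (Fm.just t X A)) ∈ S → XPar X →
      TabRule S [insert (Fm.neg (Fm.just t X A)) S]
  | ctr {S t X A} (u : ℕ) : Fm.neg (Fm.just t X A) ∈ S → XPar X → Sum.inr u ∉ X →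
      TabRule S [insert (Fm.neg (Fm.just t (insert (Sum.inr u) X) A)) S]
  | exp {S t X A} (u : ℕ) : Fm.neg (Fm.just t (insert (Sum.inr u) X) A) ∈ S →
      XPar X → Sum.inr u ∉ X → u ∉ A.kocc →
      TabRule S [insert (Fm.neg (Fm.just t X A)) S]
  | ins {S t X A} (x u : ℕ) : Fm.neg (Fm.just t X (A.subst1 x u)) ∈ S → XPar X →
      TabRule S [insert (Fm.neg (Fm.just t X A)) S]
  | genx {S t X A x} : Fm.neg (Fm.just (Tm.gen x t) X (Fm.all x A)) ∈ S → XPar X →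
      TabRule S [insert (Fm.neg (Fm.just t X A)) S]

/-- `ClosedTableau CS S`: there is a closed `FOLP_CS`-tableau beginning with the
formulas of `S`.  A branch closes if it contains both `A` and `¬A`, or contains
`¬c:A` with `c:A ∈ CS`. -/
inductive ClosedTableau (CS : Set (ℕ × Fm Empty)) : Set (Fm ℕ) → Prop
  | close {S A} : A ∈ S → Fm.neg A ∈ S → ClosedTableau CS S
  | closeCS {S c A} : (c, A) ∈ CS →
      Fm.neg (Fm.just (Tm.jconst c) ∅ (toK A)) ∈ S → ClosedTableau CS S
  | step {S l} : TabRule S l → (∀ S' ∈ l, ClosedTableau CS S') → ClosedTableau CS S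

/-- An `FOLP_CS`-tableau proof of the sentence `F`: a closed tableau beginning
with `¬F`. -/
def TabProof (CS : Set (ℕ × Fm Empty)) (F : Fm Empty) : Prop :=
  ClosedTableau CS {Fm.neg (toK F)}

/-- A set of closed Par-formulas is tableau `FOLP_CS`-consistent if no finite
subset of it has a closed `FOLP_CS`-tableau. -/
def TabConsistent (CS : Set (ℕ × Fm Empty)) (Γ : Set (Fm ℕ)) : Prop :=
  ∀ S : Set (Fm ℕ), S ⊆ Γ → S.Finite → ¬ ClosedTableau CS S

/-- `Γ` is maximal: it has no proper tableau consistent extension by closed Par-formulas. -/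
def MaximalCons (CS : Set (ℕ × Fm Empty)) (Γ : Set (Fm ℕ)) : Prop :=
  TabConsistent CS Γ ∧
    ∀ Δ : Set (Fm ℕ), Γ ⊆ Δ → (∀ F ∈ Δ, F.Closed) → TabConsistent CS Δ → Δ = Γ

/-- `Γ` is E-complete (with parameters as witnesses). -/
def EComplete (Γ : Set (Fm ℕ)) : Prop :=
  (∀ (x : ℕ) (A : Fm ℕ), Fm.ex x A ∈ Γ → ∃ u : ℕ, A.subst1 x u ∈ Γ) ∧
  (∀ (x : ℕ) (A : Fm ℕ), Fm.neg (Fm.all x A) ∈ Γ → ∃ u : ℕ, Fm.neg (A.subst1 x u) ∈ Γ)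

/-- The interpretation of the canonical model determined by `Γ`:
`I(Q) = { (u₁,…,uₙ) | Q(u₁,…,uₙ) ∈ Γ }`. -/
def canI (Γ : Set (Fm ℕ)) (Q : ℕ) : Set (List ℕ) :=
  {us | Fm.pred Q (us.map Sum.inr) ∈ Γ}

/-- The evidence function of the canonical model determined by `Γ`:
`E(t) = { A | ¬ t:_{Par(A)} A ∉ Γ }`. -/
def canE (Γ : Set (Fm ℕ)) (t : Tm) : Set (Fm ℕ) :=
  {A | Fm.neg (Fm.just t (A.kocc.image Sum.inr) A) ∉ Γ}

section AuxStructural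

variable {K K' K'' : Type}

lemma mem_leftFinset {W : Finset (ℕ ⊕ K)} {x : ℕ} :
    x ∈ (W.toList.filterMap Sum.getLeft?).toFinset ↔ Sum.inl x ∈ W := by
  simp only [List.mem_toFinset, List.mem_filterMap, Finset.mem_toList]
  constructor
  · rintro ⟨s, hs, hgl⟩
    cases s with
    | inl y => simp only [Sum.getLeft?] at hgl; cases hgl; exact hs
    | inr a => simp [Sum.getLeft?] at hgl
  · exact fun h => ⟨Sum.inl x, h, rfl⟩

lemma mem_rightFinset {W : Finset (ℕ ⊕ K)} {a : K} :
    a ∈ (W.toList.filterMap Sum.getRight?).toFinset ↔ Sum.inr a ∈ W := by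
  simp only [List.mem_toFinset, List.mem_filterMap, Finset.mem_toList]
  constructor
  · rintro ⟨s, hs, hgl⟩
    cases s with
    | inl y => simp [Sum.getRight?] at hgl
    | inr b => simp only [Sum.getRight?] at hgl; cases hgl; exact hs
  · exact fun h => ⟨Sum.inr a, h, rfl⟩

lemma getRight?_smap (f : K → K') (s : ℕ ⊕ K) :
    Sum.getRight? (Sum.map id f s) = (Sum.getRight? s).map f := by cases s <;> rfl

lemma getLeft?_smap (f : K → K') (s : ℕ ⊕ K) :
    Sum.getLeft? (Sum.map id f s) = Sum.getLeft? s := by cases s <;> rfl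

lemma inl_mem_image_map {X : Finset (ℕ ⊕ K)} {f : K → K'} {x : ℕ} :
    Sum.inl x ∈ X.image (Sum.map id f) ↔ Sum.inl x ∈ X := by
  simp only [Finset.mem_image]
  constructor
  · rintro ⟨s, hs, hgl⟩
    cases s with
    | inl y => simp only [Sum.map_inl, id] at hgl; cases hgl; exact hs
    | inr c => simp [Sum.map_inr] at hgl
  · exact fun h => ⟨_, h, rfl⟩

lemma rightFinset_image_map {X : Finset (ℕ ⊕ K)} {f : K → K'} :
    (((X.image (Sum.map id f)).toList.filterMap Sum.getRight?).toFinset : Finset K')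
      = (X.toList.filterMap Sum.getRight?).toFinset.image f := by
  ext a
  simp only [mem_rightFinset, Finset.mem_image, mem_rightFinset]
  constructor
  · rintro ⟨s, hs, hgl⟩
    cases s with
    | inl x => simp [Sum.map_inl] at hgl
    | inr c =>
        simp only [Sum.map_inr, Sum.inr.injEq] at hgl
        exact ⟨c, hs, hgl⟩
  · rintro ⟨c, hc, rfl⟩
    exact ⟨Sum.inr c, hc, rfl⟩

lemma leftFinset_image_map {X : Finset (ℕ ⊕ K)} {f : K → K'} :
    (((X.image (Sum.map id f)).toList.filterMap Sum.getLeft?).toFinset : Finset ℕ)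
      = (X.toList.filterMap Sum.getLeft?).toFinset := by
  ext x
  simp only [mem_leftFinset]
  exact inl_mem_image_map

namespace Fm

lemma kocc_kmap (f : K → K') (A : Fm K) : (A.kmap f).kocc = A.kocc.image f := by
  induction A with
  | pred Q args =>
      simp only [kmap, kocc, List.filterMap_map]
      rw [show Sum.getRight? ∘ Sum.map (id : ℕ → ℕ) f = fun s => (Sum.getRight? s).map f
        from funext (getRight?_smap f), ← List.map_filterMap]
      ext a
      simp
  | neg A ih => simpa [kmap, kocc] using ih
  | imp A B ihA ihB => simp [kmap, kocc, ihA, ihB, Finset.image_union]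
  | all x A ih => simpa [kmap, kocc] using ih
  | ex x A ih => simpa [kmap, kocc] using ih
  | just t X A ih =>
      simp [kmap, kocc, ih, Finset.image_union, rightFinset_image_map]

lemma fvar_kmap (f : K → K') (A : Fm K) : (A.kmap f).fvar = A.fvar := by
  induction A with
  | pred Q args =>
      simp only [kmap, fvar, List.filterMap_map]
      rw [show Sum.getLeft? ∘ Sum.map (id : ℕ → ℕ) f = Sum.getLeft?
        from funext (getLeft?_smap f)]
  | neg A ih => simpa [kmap, fvar] using ih
  | imp A B ihA ihB => simp [kmap, fvar, ihA, ihB]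
  | all x A ih => simp [kmap, fvar, ih]
  | ex x A ih => simp [kmap, fvar, ih]
  | just t X A ih =>
      simp [kmap, fvar, leftFinset_image_map]

lemma kmap_eq_self {f : K → K} {A : Fm K} (h : ∀ a ∈ A.kocc, f a = a) : A.kmap f = A := by
  induction A with
  | pred Q args =>
      simp only [kmap, pred.injEq, true_and]
      rw [show args = args.map id from (List.map_id args).symm]
      rw [List.map_map]
      apply List.map_congr_left
      intro s hs
      cases s with
      | inl x => simp [Sum.map_inl]
      | inr c =>
          have : c ∈ (Fm.pred (K := K) Q args).kocc := by
            simp only [kocc, List.mem_toFinset, List.mem_filterMap]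
            exact ⟨Sum.inr c, hs, rfl⟩
          simp [Sum.map_inr, h c this]
  | neg A ih => simp only [kmap, neg.injEq]; exact ih h
  | imp A B ihA ihB =>
      simp only [kmap, imp.injEq]
      exact ⟨ihA fun a ha => h a (by simp [kocc, ha]),
             ihB fun a ha => h a (by simp [kocc, ha])⟩
  | all x A ih => simp only [kmap, all.injEq, true_and]; exact ih h
  | ex x A ih => simp only [kmap, ex.injEq, true_and]; exact ih h
  | just t X A ih =>
      simp only [kmap, just.injEq, true_and]
      constructor
      · rw [show X = X.image id from (Finset.image_id).symm]
        rw [Finset.image_image]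
        apply Finset.image_congr
        intro s hs
        cases s with
        | inl x => simp [Sum.map_inl]
        | inr c =>
            have : c ∈ (Fm.just t X A).kocc := by
              simp only [kocc, Finset.mem_union, mem_rightFinset]
              exact Or.inr hs
            simp [Sum.map_inr, h c this]
      · exact ih fun a ha => h a (by simp [kocc, ha])

lemma kmap_kmap (f : K' → K'') (g : K → K') (A : Fm K) :
    (A.kmap g).kmap f = A.kmap (f ∘ g) := by
  induction A with
  | pred Q args =>
      simp only [kmap, pred.injEq, true_and, List.map_map]
      apply List.map_congr_left
      intro s hs
      cases s <;> simp [Sum.map_inl, Sum.map_inr, Function.comp]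
  | neg A ih => simp [kmap, ih]
  | imp A B ihA ihB => simp [kmap, ihA, ihB]
  | all x A ih => simp [kmap, ih]
  | ex x A ih => simp [kmap, ih]
  | just t X A ih =>
      simp only [kmap, just.injEq, true_and, Finset.image_image, ih, and_true]
      apply Finset.image_congr
      intro s hs
      cases s <;> simp [Sum.map_inl, Sum.map_inr, Function.comp]

lemma kmap_msubst (f : K → K') (σ : ℕ → Option K) (A : Fm K) :
    (A.msubst σ).kmap f = (A.kmap f).msubst (fun y => (σ y).map f) := by
  induction A generalizing σ with
  | pred Q args =>
      simp only [msubst, kmap, pred.injEq, true_and, List.map_map]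
      apply List.map_congr_left
      intro s hs
      cases s with
      | inl x =>
          cases hσ : σ x with
          | none => simp [Function.comp, subK, hσ, Sum.map_inl]
          | some a => simp [Function.comp, subK, hσ, Sum.map_inr]
      | inr a => simp [Function.comp, subK, Sum.map_inr]
  | neg A ih => simp [msubst, kmap, ih]
  | imp A B ihA ihB => simp [msubst, kmap, ihA, ihB]
  | all x A ih =>
      simp only [msubst, kmap, all.injEq, true_and, ih]
      congr 1
      funext y
      by_cases hy : y = x <;> simp [hy]
  | ex x A ih =>
      simp only [msubst, kmap, ex.injEq, true_and, ih]
      congr 1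
      funext y
      by_cases hy : y = x <;> simp [hy]
  | just t X A ih =>
      simp only [msubst, kmap, just.injEq, true_and, ih, Finset.image_image]
      constructor
      · apply Finset.image_congr
        intro s hs
        cases s with
        | inl x =>
            cases hσ : σ x with
            | none => simp [Function.comp, subK, hσ, Sum.map_inl]
            | some a => simp [Function.comp, subK, hσ, Sum.map_inr]
        | inr a => simp [Function.comp, subK, Sum.map_inr]
      · congr 1
        funext y
        by_cases hy : Sum.inl y ∈ X
        · simp [hy, inl_mem_image_map.mpr hy]
        · simp [hy, fun h => hy (inl_mem_image_map.mp h)]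

lemma kmap_subst1 (f : K → K') (x : ℕ) (a : K) (A : Fm K) :
    (A.subst1 x a).kmap f = (A.kmap f).subst1 x (f a) := by
  rw [subst1, subst1, kmap_msubst]
  congr 1
  funext y
  by_cases hy : y = x <;> simp [hy]

lemma kmap_all_foldr (f : K → K') (l : List ℕ) (A : Fm K) :
    (l.foldr Fm.all A).kmap f = l.foldr Fm.all (A.kmap f) := by
  induction l with
  | nil => rfl
  | cons y l ih => simp [kmap, ih]

lemma kmap_univClosure (f : K → K') (A : Fm K) :
    A.univClosure.kmap f = (A.kmap f).univClosure := by
  rw [univClosure, univClosure, kmap_all_foldr, fvar_kmap]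

end Fm

end AuxStructural

section AuxTableau

lemma mem_image_inst {α β : Type*} {inst : DecidableEq β} {f : α → β} {s : Finset α} {b : β} :
    b ∈ @Finset.image α β inst f s ↔ ∃ a ∈ s, f a = b :=
  @Finset.mem_image _ _ inst _ _ _

lemma Fm.kocc_toK (A : Fm Empty) : (toK (K := ℕ) A).kocc = ∅ := by
  rw [toK, Fm.kocc_kmap]
  ext a
  simp only [Finset.notMem_empty, iff_false, mem_image_inst]
  rintro ⟨b, _, _⟩
  exact b.elim

lemma toK_kmap (g : ℕ → ℕ) (A : Fm Empty) : (toK (K := ℕ) A).kmap g = toK A :=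
  Fm.kmap_eq_self (by simp [Fm.kocc_toK])

lemma closed_neg_just (t : Tm) (W : Finset ℕ) (A : Fm ℕ) :
    (Fm.neg (Fm.just t (W.image Sum.inr) A)).Closed := by
  simp only [Fm.Closed, Fm.fvar]
  rw [Finset.eq_empty_iff_forall_notMem]
  intro x hx
  rw [mem_leftFinset] at hx
  rw [mem_image_inst] at hx
  obtain ⟨u, _, h⟩ := hx
  exact absurd h (by simp)

lemma xpar_image_inr {inst : DecidableEq (ℕ ⊕ ℕ)} (W : Finset ℕ) :
    XPar (@Finset.image _ _ inst Sum.inr W) := by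
  intro s hs
  rw [mem_image_inst] at hs
  obtain ⟨u, _, rfl⟩ := hs
  exact ⟨u, rfl⟩

lemma XPar.image_smap {X : Finset (ℕ ⊕ ℕ)} (h : XPar X) (g : ℕ → ℕ)
    {inst : DecidableEq (ℕ ⊕ ℕ)} : XPar (@Finset.image _ _ inst (Sum.map id g) X) := by
  intro s hs
  rw [mem_image_inst] at hs
  obtain ⟨a, ha, rfl⟩ := hs
  obtain ⟨u, rfl⟩ := h a ha
  exact ⟨g u, rfl⟩

lemma inr_mem_image_smap {X : Finset (ℕ ⊕ ℕ)} {g : ℕ → ℕ} (hg : Function.Injective g)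
    {inst : DecidableEq (ℕ ⊕ ℕ)} {u : ℕ} :
    Sum.inr (g u) ∈ @Finset.image _ _ inst (Sum.map id g) X ↔ Sum.inr u ∈ X := by
  rw [mem_image_inst]
  constructor
  · rintro ⟨s, hs, hgl⟩
    cases s with
    | inl x => simp at hgl
    | inr v =>
        simp only [Sum.map_inr, Sum.inr.injEq] at hgl
        exact hg hgl ▸ hs
  · exact fun h => ⟨_, h, by simp⟩

lemma mem_union_inst {α : Type*} {inst : DecidableEq α} {s t : Finset α} {a : α} :
    a ∈ @Union.union _ (@Finset.instUnion _ inst) s t ↔ a ∈ s ∨ a ∈ t := by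
  exact Finset.mem_union

lemma mem_insert_inst {α : Type*} {inst : DecidableEq α} {a b : α} {s : Finset α} :
    a ∈ @insert _ _ (@Finset.instInsert _ inst) b s ↔ a = b ∨ a ∈ s := by
  exact Finset.mem_insert

lemma image_insert_inr_eq {i1 i2 i3 : DecidableEq (ℕ ⊕ ℕ)} {g : ℕ → ℕ} {u : ℕ}
    {X : Finset (ℕ ⊕ ℕ)} :
    @Finset.image _ _ i1 (Sum.map id g) (@insert _ _ (@Finset.instInsert _ i2) (Sum.inr u) X)
      = @insert _ _ (@Finset.instInsert _ i3) (Sum.inr (g u))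
          (@Finset.image _ _ i1 (Sum.map id g) X) := by
  ext b
  rw [mem_image_inst, mem_insert_inst]
  constructor
  · rintro ⟨c, hc, rfl⟩
    rcases mem_insert_inst.mp hc with rfl | h
    · exact Or.inl (by simp)
    · exact Or.inr (mem_image_inst.mpr ⟨c, h, rfl⟩)
  · rintro (rfl | hb)
    · exact ⟨Sum.inr u, mem_insert_inst.mpr (Or.inl rfl), by simp⟩
    · obtain ⟨c, hc, rfl⟩ := mem_image_inst.mp hb
      exact ⟨c, mem_insert_inst.mpr (Or.inr hc), rfl⟩

theorem TabRule.kmapPerm {g : ℕ → ℕ} (hg : Function.Injective g) {S : Set (Fm ℕ)}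
    {l : List (Set (Fm ℕ))} (h : TabRule S l) :
    TabRule ((Fm.kmap g) '' S) (l.map (Set.image (Fm.kmap g))) := by
  cases h with
  | @fneg A hmem =>
      have h1 := Set.mem_image_of_mem (Fm.kmap g) hmem
      simp only [Fm.kmap] at h1
      simp only [List.map_cons, List.map_nil, Set.image_insert_eq]
      exact TabRule.fneg h1
  | @timp A B hmem =>
      have h1 := Set.mem_image_of_mem (Fm.kmap g) hmem
      simp only [Fm.kmap] at h1
      simp only [List.map_cons, List.map_nil, Set.image_insert_eq, Fm.kmap]
      exact TabRule.timp h1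
  | @fimp A B hmem =>
      have h1 := Set.mem_image_of_mem (Fm.kmap g) hmem
      simp only [Fm.kmap] at h1
      simp only [List.map_cons, List.map_nil, Set.image_insert_eq, Fm.kmap]
      exact TabRule.fimp h1
  | @tall x A u hmem =>
      have h1 := Set.mem_image_of_mem (Fm.kmap g) hmem
      simp only [Fm.kmap] at h1
      simp only [List.map_cons, List.map_nil, Set.image_insert_eq, Fm.kmap_subst1]
      exact TabRule.tall (g u) h1
  | @fex x A u hmem =>
      have h1 := Set.mem_image_of_mem (Fm.kmap g) hmem
      simp only [Fm.kmap] at h1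
      simp only [List.map_cons, List.map_nil, Set.image_insert_eq, Fm.kmap, Fm.kmap_subst1]
      exact TabRule.fex (g u) h1
  | @tex x A u hmem hfresh =>
      have h1 := Set.mem_image_of_mem (Fm.kmap g) hmem
      simp only [Fm.kmap] at h1
      simp only [List.map_cons, List.map_nil, Set.image_insert_eq, Fm.kmap_subst1]
      refine TabRule.tex (g u) h1 ?_
      rintro F ⟨F₀, hF₀, rfl⟩ hk
      rw [Fm.kocc_kmap, mem_image_inst] at hk
      obtain ⟨a, ha, hga⟩ := hk
      exact hfresh F₀ hF₀ (hg hga ▸ ha)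
  | @fall x A u hmem hfresh =>
      have h1 := Set.mem_image_of_mem (Fm.kmap g) hmem
      simp only [Fm.kmap] at h1
      simp only [List.map_cons, List.map_nil, Set.image_insert_eq, Fm.kmap, Fm.kmap_subst1]
      refine TabRule.fall (g u) h1 ?_
      rintro F ⟨F₀, hF₀, rfl⟩ hk
      rw [Fm.kocc_kmap, mem_image_inst] at hk
      obtain ⟨a, ha, hga⟩ := hk
      exact hfresh F₀ hF₀ (hg hga ▸ ha)
  | @tcolon t X A hmem hX =>
      have h1 := Set.mem_image_of_mem (Fm.kmap g) hmem
      simp only [Fm.kmap] at h1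
      simp only [List.map_cons, List.map_nil, Set.image_insert_eq, Fm.kmap_univClosure]
      exact TabRule.tcolon h1 (hX.image_smap g)
  | @fplus t s X A hmem hX =>
      have h1 := Set.mem_image_of_mem (Fm.kmap g) hmem
      simp only [Fm.kmap] at h1
      simp only [List.map_cons, List.map_nil, Set.image_insert_eq, Fm.kmap]
      exact TabRule.fplus h1 (hX.image_smap g)
  | @fapp s t X B A hmem hX hA =>
      have h1 := Set.mem_image_of_mem (Fm.kmap g) hmem
      simp only [Fm.kmap] at h1
      simp only [List.map_cons, List.map_nil, Set.image_insert_eq, Fm.kmap]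
      refine TabRule.fapp (A.kmap g) h1 (hX.image_smap g) ?_
      intro v hv
      rw [Fm.kocc_kmap, mem_image_inst] at hv
      obtain ⟨a, ha, rfl⟩ := hv
      exact mem_image_inst.mpr ⟨_, hA a ha, by simp⟩
  | @fbang t X A hmem hX =>
      have h1 := Set.mem_image_of_mem (Fm.kmap g) hmem
      simp only [Fm.kmap] at h1
      simp only [List.map_cons, List.map_nil, Set.image_insert_eq, Fm.kmap]
      exact TabRule.fbang h1 (hX.image_smap g)
  | @ctr t X A u hmem hX hu =>
      have h1 := Set.mem_image_of_mem (Fm.kmap g) hmem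
      simp only [Fm.kmap] at h1
      simp only [List.map_cons, List.map_nil, Set.image_insert_eq, Fm.kmap]
      have h2 := TabRule.ctr (g u) h1 (hX.image_smap g)
        (fun hc => hu ((inr_mem_image_smap hg).mp hc))
      convert h2 using 5
      exact image_insert_inr_eq
  | @exp t X A u hmem hX hu hA =>
      have h1 := Set.mem_image_of_mem (Fm.kmap g) hmem
      simp only [Fm.kmap] at h1
      rw [image_insert_inr_eq (i3 := inferInstance)] at h1
      simp only [List.map_cons, List.map_nil, Set.image_insert_eq, Fm.kmap]
      refine TabRule.exp (g u) h1 (hX.image_smap g)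
        (fun hc => hu ((inr_mem_image_smap hg).mp hc)) ?_
      rw [Fm.kocc_kmap, mem_image_inst]
      rintro ⟨a, ha, hga⟩
      exact hA (hg hga ▸ ha)
  | @ins t X A x u hmem hX =>
      have h1 := Set.mem_image_of_mem (Fm.kmap g) hmem
      simp only [Fm.kmap, Fm.kmap_subst1] at h1
      simp only [List.map_cons, List.map_nil, Set.image_insert_eq, Fm.kmap]
      exact TabRule.ins x (g u) h1 (hX.image_smap g)
  | @genx t X A x hmem hX =>
      have h1 := Set.mem_image_of_mem (Fm.kmap g) hmem
      simp only [Fm.kmap] at h1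
      simp only [List.map_cons, List.map_nil, Set.image_insert_eq, Fm.kmap]
      exact TabRule.genx h1 (hX.image_smap g)

theorem ClosedTableau.kmapPerm {CS : Set (ℕ × Fm Empty)} {g : ℕ → ℕ}
    (hg : Function.Injective g) {S : Set (Fm ℕ)} (h : ClosedTableau CS S) :
    ClosedTableau CS ((Fm.kmap g) '' S) := by
  induction h with
  | @close S A hA hnA =>
      refine ClosedTableau.close (Set.mem_image_of_mem _ hA) ?_
      have h1 := Set.mem_image_of_mem (Fm.kmap g) hnA
      simpa only [Fm.kmap] using h1
  | @closeCS S c A hcs hmem =>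
      refine ClosedTableau.closeCS hcs ?_
      have h1 := Set.mem_image_of_mem (Fm.kmap g) hmem
      simpa only [Fm.kmap, Finset.image_empty, toK_kmap] using h1
  | @step S l hr hch ih =>
      refine ClosedTableau.step (hr.kmapPerm hg) ?_
      intro T hT
      rw [List.mem_map] at hT
      obtain ⟨S₀, hS₀, rfl⟩ := hT
      exact ih S₀ hS₀

end AuxTableau

section AuxWeaken

lemma exists_fresh_param (S : Set (Fm ℕ)) (hfin : S.Finite) :
    ∃ u : ℕ, ∀ F ∈ S, u ∉ F.kocc := by
  obtain ⟨u, hu⟩ := Infinite.exists_notMem_finset (hfin.toFinset.sup Fm.kocc)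
  refine ⟨u, fun F hF hk => hu ?_⟩
  exact Finset.le_sup (f := Fm.kocc) (hfin.mem_toFinset.mpr hF) hk

theorem ClosedTableau.weaken {CS : Set (ℕ × Fm Empty)} {S : Set (Fm ℕ)}
    (h : ClosedTableau CS S) :
    ∀ S' : Set (Fm ℕ), S ⊆ S' → S'.Finite → ClosedTableau CS S' := by
  induction h with
  | @close S A hA hnA => exact fun S' hsub _ => .close (hsub hA) (hsub hnA)
  | @closeCS S c A hcs hmem => exact fun S' hsub _ => .closeCS hcs (hsub hmem)
  | @step S l hr hch ih =>
    intro S' hsub hfin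
    cases hr with
    | @fneg A hmem =>
        refine .step (TabRule.fneg (hsub hmem)) ?_
        intro T hT
        rw [List.mem_singleton] at hT
        subst hT
        exact ih _ (by simp) _ (Set.insert_subset_insert hsub) (hfin.insert _)
    | @timp A B hmem =>
        refine .step (TabRule.timp (hsub hmem)) ?_
        intro T hT
        simp only [List.mem_cons, List.not_mem_nil, or_false] at hT
        rcases hT with rfl | rfl
        · exact ih _ (by simp) _ (Set.insert_subset_insert hsub) (hfin.insert _)
        · exact ih _ (by simp) _ (Set.insert_subset_insert hsub) (hfin.insert _)
    | @fimp A B hmem =>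
        refine .step (TabRule.fimp (hsub hmem)) ?_
        intro T hT
        rw [List.mem_singleton] at hT
        subst hT
        exact ih _ (by simp) _
          (Set.insert_subset_insert (Set.insert_subset_insert hsub))
          ((hfin.insert _).insert _)
    | @tall x A u hmem =>
        refine .step (TabRule.tall u (hsub hmem)) ?_
        intro T hT
        rw [List.mem_singleton] at hT
        subst hT
        exact ih _ (by simp) _ (Set.insert_subset_insert hsub) (hfin.insert _)
    | @fex x A u hmem =>
        refine .step (TabRule.fex u (hsub hmem)) ?_
        intro T hT
        rw [List.mem_singleton] at hT
        subst hT
        exact ih _ (by simp) _ (Set.insert_subset_insert hsub) (hfin.insert _)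
    | @tex x A u hmem hfresh =>
        obtain ⟨u', hu'⟩ := exists_fresh_param S' hfin
        have hswap : ∀ F ∈ S, Fm.kmap (⇑(Equiv.swap u u')) F = F := by
          intro F hF
          refine Fm.kmap_eq_self (fun a ha => Equiv.swap_apply_of_ne_of_ne ?_ ?_)
          · rintro rfl; exact hfresh F hF ha
          · rintro rfl; exact hu' F (hsub hF) ha
        have hAkocc : ∀ a ∈ A.kocc, a ≠ u ∧ a ≠ u' := by
          intro a ha
          have h1 : a ∈ (Fm.ex x A).kocc := by simpa [Fm.kocc] using ha
          exact ⟨fun h => hfresh _ hmem (h ▸ h1), fun h => hu' _ (hsub hmem) (h ▸ h1)⟩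
        have hAfix : Fm.kmap (⇑(Equiv.swap u u')) A = A :=
          Fm.kmap_eq_self fun a ha =>
            Equiv.swap_apply_of_ne_of_ne (hAkocc a ha).1 (hAkocc a ha).2
        have h1 : ClosedTableau CS
            (insert (A.subst1 x u) ((Fm.kmap ⇑(Equiv.swap u u')) '' S')) := by
          refine ih (insert (A.subst1 x u) S) (by simp) _ ?_ ((hfin.image _).insert _)
          intro F hF
          rcases Set.mem_insert_iff.mp hF with rfl | hF
          · exact Set.mem_insert _ _
          · exact Set.mem_insert_of_mem _ ⟨F, hsub hF, hswap F hF⟩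
        have h2 := h1.kmapPerm (Equiv.swap u u').injective
        rw [Set.image_insert_eq] at h2
        have e1 : Fm.kmap (⇑(Equiv.swap u u')) (A.subst1 x u) = A.subst1 x u' := by
          rw [Fm.kmap_subst1, hAfix, Equiv.swap_apply_left]
        have e2 : (Fm.kmap ⇑(Equiv.swap u u')) '' ((Fm.kmap ⇑(Equiv.swap u u')) '' S')
            = S' := by
          rw [Set.image_image]
          have hgg : ∀ F : Fm ℕ,
              Fm.kmap (⇑(Equiv.swap u u')) (Fm.kmap (⇑(Equiv.swap u u')) F) = F := by
            intro F
            rw [Fm.kmap_kmap]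
            exact Fm.kmap_eq_self (fun a _ => Equiv.swap_apply_self _ _ _)
          simp only [hgg, Set.image_id']
        rw [e1, e2] at h2
        refine .step (TabRule.tex u' (hsub hmem) hu') ?_
        intro T hT
        rw [List.mem_singleton] at hT
        subst hT
        exact h2
    | @fall x A u hmem hfresh =>
        obtain ⟨u', hu'⟩ := exists_fresh_param S' hfin
        have hswap : ∀ F ∈ S, Fm.kmap (⇑(Equiv.swap u u')) F = F := by
          intro F hF
          refine Fm.kmap_eq_self (fun a ha => Equiv.swap_apply_of_ne_of_ne ?_ ?_)
          · rintro rfl; exact hfresh F hF ha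
          · rintro rfl; exact hu' F (hsub hF) ha
        have hAkocc : ∀ a ∈ A.kocc, a ≠ u ∧ a ≠ u' := by
          intro a ha
          have h1 : a ∈ (Fm.neg (Fm.all x A)).kocc := by simpa [Fm.kocc] using ha
          exact ⟨fun h => hfresh _ hmem (h ▸ h1), fun h => hu' _ (hsub hmem) (h ▸ h1)⟩
        have hAfix : Fm.kmap (⇑(Equiv.swap u u')) A = A :=
          Fm.kmap_eq_self fun a ha =>
            Equiv.swap_apply_of_ne_of_ne (hAkocc a ha).1 (hAkocc a ha).2
        have h1 : ClosedTableau CS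
            (insert (Fm.neg (A.subst1 x u)) ((Fm.kmap ⇑(Equiv.swap u u')) '' S')) := by
          refine ih (insert (Fm.neg (A.subst1 x u)) S) (by simp) _ ?_ ((hfin.image _).insert _)
          intro F hF
          rcases Set.mem_insert_iff.mp hF with rfl | hF
          · exact Set.mem_insert _ _
          · exact Set.mem_insert_of_mem _ ⟨F, hsub hF, hswap F hF⟩
        have h2 := h1.kmapPerm (Equiv.swap u u').injective
        rw [Set.image_insert_eq] at h2
        have e1 : Fm.kmap (⇑(Equiv.swap u u')) (Fm.neg (A.subst1 x u))
            = Fm.neg (A.subst1 x u') := by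
          simp only [Fm.kmap, Fm.kmap_subst1, hAfix, Equiv.swap_apply_left]
        have e2 : (Fm.kmap ⇑(Equiv.swap u u')) '' ((Fm.kmap ⇑(Equiv.swap u u')) '' S')
            = S' := by
          rw [Set.image_image]
          have hgg : ∀ F : Fm ℕ,
              Fm.kmap (⇑(Equiv.swap u u')) (Fm.kmap (⇑(Equiv.swap u u')) F) = F := by
            intro F
            rw [Fm.kmap_kmap]
            exact Fm.kmap_eq_self (fun a _ => Equiv.swap_apply_self _ _ _)
          simp only [hgg, Set.image_id']
        rw [e1, e2] at h2
        refine .step (TabRule.fall u' (hsub hmem) hu') ?_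
        intro T hT
        rw [List.mem_singleton] at hT
        subst hT
        exact h2
    | @tcolon t X A hmem hX =>
        refine .step (TabRule.tcolon (hsub hmem) hX) ?_
        intro T hT
        rw [List.mem_singleton] at hT
        subst hT
        exact ih _ (by simp) _ (Set.insert_subset_insert hsub) (hfin.insert _)
    | @fplus t s X A hmem hX =>
        refine .step (TabRule.fplus (hsub hmem) hX) ?_
        intro T hT
        rw [List.mem_singleton] at hT
        subst hT
        exact ih _ (by simp) _
          (Set.insert_subset_insert (Set.insert_subset_insert hsub))
          ((hfin.insert _).insert _)
    | @fapp s t X B A hmem hX hA =>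
        refine .step (TabRule.fapp A (hsub hmem) hX hA) ?_
        intro T hT
        simp only [List.mem_cons, List.not_mem_nil, or_false] at hT
        rcases hT with rfl | rfl
        · exact ih _ (by simp) _ (Set.insert_subset_insert hsub) (hfin.insert _)
        · exact ih _ (by simp) _ (Set.insert_subset_insert hsub) (hfin.insert _)
    | @fbang t X A hmem hX =>
        refine .step (TabRule.fbang (hsub hmem) hX) ?_
        intro T hT
        rw [List.mem_singleton] at hT
        subst hT
        exact ih _ (by simp) _ (Set.insert_subset_insert hsub) (hfin.insert _)
    | @ctr t X A u hmem hX hu =>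
        refine .step (TabRule.ctr u (hsub hmem) hX hu) ?_
        intro T hT
        rw [List.mem_singleton] at hT
        subst hT
        exact ih _ (by simp) _ (Set.insert_subset_insert hsub) (hfin.insert _)
    | @exp t X A u hmem hX hu hA =>
        refine .step (TabRule.exp u (hsub hmem) hX hu hA) ?_
        intro T hT
        rw [List.mem_singleton] at hT
        subst hT
        exact ih _ (by simp) _ (Set.insert_subset_insert hsub) (hfin.insert _)
    | @ins t X A x u hmem hX =>
        refine .step (TabRule.ins x u (hsub hmem) hX) ?_
        intro T hT
        rw [List.mem_singleton] at hT
        subst hT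
        exact ih _ (by simp) _ (Set.insert_subset_insert hsub) (hfin.insert _)
    | @genx t X A x hmem hX =>
        refine .step (TabRule.genx (hsub hmem) hX) ?_
        intro T hT
        rw [List.mem_singleton] at hT
        subst hT
        exact ih _ (by simp) _ (Set.insert_subset_insert hsub) (hfin.insert _)

end AuxWeaken

/-- condition E2 for the canonical evidence function
`E(t) = {A | ¬t:_{Par(A)} A ∉ Γ}`. -/
theorem canonical_E2
    (CS : Set (ℕ × Fm Empty)) (hCS : ConstantSpec CS)
    (Γ : Set (Fm ℕ)) (hclosed : ∀ F ∈ Γ, F.Closed)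
    (hmax : MaximalCons CS Γ) (hE : EComplete Γ)
    (s t : Tm) (A B : Fm ℕ)
    (hA : A ∈ canE Γ t) (hAB : Fm.imp A B ∈ canE Γ s) :
    B ∈ canE Γ (Tm.app s t) := by
  have hcons := hmax.1
  have notMem : ∀ F : Fm ℕ, F.Closed → F ∉ Γ →
      ∃ T : Set (Fm ℕ), T ⊆ Γ ∧ T.Finite ∧ ClosedTableau CS (insert F T) := by
    intro F hFc hF
    have hΔ : ¬ TabConsistent CS (insert F Γ) := by
      intro hc
      have heq := hmax.2 (insert F Γ) (Set.subset_insert _ _)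
        (by rintro G (rfl | hG); exacts [hFc, hclosed G hG]) hc
      exact hF (heq ▸ Set.mem_insert F Γ)
    rw [TabConsistent] at hΔ
    push_neg at hΔ
    obtain ⟨T0, hT0, hT0fin, hct⟩ := hΔ
    refine ⟨T0 \ {F}, ?_, hT0fin.diff, ?_⟩
    · intro G hG
      rcases Set.mem_insert_iff.mp (hT0 hG.1) with rfl | h
      · exact absurd rfl hG.2
      · exact h
    · refine hct.weaken _ ?_ (hT0fin.diff.insert _)
      intro G hG
      by_cases hGF : G = F
      · exact hGF ▸ Set.mem_insert _ _
      · exact Set.mem_insert_of_mem _ ⟨hG, fun h => hGF h⟩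
  have rule1 : ∀ G G' : Fm ℕ, G ∈ Γ → G'.Closed →
      (∀ S : Set (Fm ℕ), G ∈ S → TabRule S [insert G' S]) → G' ∈ Γ := by
    intro G G' hG hG'c hrule
    by_contra hG'
    obtain ⟨T, hTΓ, hTfin, hct⟩ := notMem G' hG'c hG'
    refine hcons (insert G T) (Set.insert_subset hG hTΓ) (hTfin.insert _) ?_
    refine ClosedTableau.step (hrule _ (Set.mem_insert _ _)) ?_
    intro T' hT'
    rw [List.mem_singleton] at hT'
    subst hT'
    exact hct.weaken _ (Set.insert_subset_insert (Set.subset_insert _ _))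
      ((hTfin.insert _).insert _)
  have rule2 : ∀ G G₁ G₂ : Fm ℕ, G ∈ Γ → G₁.Closed → G₂.Closed →
      (∀ S : Set (Fm ℕ), G ∈ S → TabRule S [insert G₁ S, insert G₂ S]) →
      G₁ ∈ Γ ∨ G₂ ∈ Γ := by
    intro G G₁ G₂ hG h1c h2c hrule
    by_contra hcon
    push_neg at hcon
    obtain ⟨T₁, hT₁Γ, hT₁fin, hct₁⟩ := notMem G₁ h1c hcon.1
    obtain ⟨T₂, hT₂Γ, hT₂fin, hct₂⟩ := notMem G₂ h2c hcon.2
    have hfinT : (insert G (T₁ ∪ T₂) : Set (Fm ℕ)).Finite := (hT₁fin.union hT₂fin).insert _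
    refine hcons (insert G (T₁ ∪ T₂))
      (Set.insert_subset hG (Set.union_subset hT₁Γ hT₂Γ)) hfinT ?_
    refine ClosedTableau.step (hrule _ (Set.mem_insert _ _)) ?_
    intro T' hT'
    simp only [List.mem_cons, List.not_mem_nil, or_false] at hT'
    rcases hT' with rfl | rfl
    · refine hct₁.weaken _ (Set.insert_subset_insert ?_) (hfinT.insert _)
      exact fun x hx => Set.mem_insert_of_mem _ (Set.mem_union_left _ hx)
    · refine hct₂.weaken _ (Set.insert_subset_insert ?_) (hfinT.insert _)
      exact fun x hx => Set.mem_insert_of_mem _ (Set.mem_union_right _ hx)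
  by_contra hB
  simp only [canE, Set.mem_setOf_eq, not_not] at hB hA hAB
  have claim1 : ∀ Z : Finset ℕ,
      Fm.neg (Fm.just (Tm.app s t) ((Z ∪ B.kocc).image Sum.inr) B) ∈ Γ := by
    intro Z
    induction Z using Finset.induction_on with
    | empty => simpa using hB
    | @insert u Z hu ihZ =>
        by_cases hmem : u ∈ Z ∪ B.kocc
        · have heq : insert u Z ∪ B.kocc = Z ∪ B.kocc := by
            rw [Finset.insert_union, Finset.insert_eq_self.mpr hmem]
          rw [heq]
          exact ihZ
        · have heq : ((insert u Z ∪ B.kocc).image Sum.inr : Finset (ℕ ⊕ ℕ))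
              = insert (Sum.inr u) ((Z ∪ B.kocc).image Sum.inr) := by
            rw [Finset.insert_union]
            exact Finset.image_insert _ _ _
          have hnotin : Sum.inr u ∉ ((Z ∪ B.kocc).image Sum.inr : Finset (ℕ ⊕ ℕ)) := by
            intro hc
            obtain ⟨v, hv, hveq⟩ := Finset.mem_image.mp hc
            exact hmem (Sum.inr.inj hveq ▸ hv)
          refine rule1 _ _ ihZ (closed_neg_just _ _ _) ?_
          intro S hS
          rw [heq]
          exact TabRule.ctr u hS (xpar_image_inr _) hnotin
  have hY := claim1 A.kocc
  have hrulef : ∀ S : Set (Fm ℕ),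
      Fm.neg (Fm.just (Tm.app s t) ((A.kocc ∪ B.kocc).image Sum.inr) B) ∈ S →
      TabRule S
        [insert (Fm.neg (Fm.just s ((A.kocc ∪ B.kocc).image Sum.inr) (A.imp B))) S,
         insert (Fm.neg (Fm.just t ((A.kocc ∪ B.kocc).image Sum.inr) A)) S] := by
    intro S hS
    refine TabRule.fapp A hS (xpar_image_inr _) ?_
    intro u hu
    exact Finset.mem_image_of_mem _ (Finset.mem_union_left _ hu)
  rcases rule2 _ _ _ hY (closed_neg_just _ _ _) (closed_neg_just _ _ _) hrulef with h1 | h2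
  · have hU : (Fm.imp A B).kocc = A.kocc ∪ B.kocc := by
      ext a
      simp only [Fm.kocc]
      rw [mem_union_inst, Finset.mem_union]
    rw [hU] at hAB
    exact hAB h1
  · have claim3 : ∀ Z : Finset ℕ,
        Fm.neg (Fm.just t ((A.kocc ∪ Z).image Sum.inr) A) ∈ Γ →
        Fm.neg (Fm.just t (A.kocc.image Sum.inr) A) ∈ Γ := by
      intro Z
      induction Z using Finset.induction_on with
      | empty => intro h; simpa using h
      | @insert u Z hu ihZ =>
          intro h
          by_cases hmem : u ∈ A.kocc ∪ Z
          · apply ihZ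
            have heq : A.kocc ∪ insert u Z = A.kocc ∪ Z := by
              rw [Finset.union_insert, Finset.insert_eq_self.mpr hmem]
            rwa [heq] at h
          · apply ihZ
            have heq : ((A.kocc ∪ insert u Z).image Sum.inr : Finset (ℕ ⊕ ℕ))
                = insert (Sum.inr u) ((A.kocc ∪ Z).image Sum.inr) := by
              rw [Finset.union_insert]
              exact Finset.image_insert _ _ _
            have hnotin : Sum.inr u ∉ ((A.kocc ∪ Z).image Sum.inr : Finset (ℕ ⊕ ℕ)) := by
              intro hc
              obtain ⟨v, hv, hveq⟩ := Finset.mem_image.mp hc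
              exact hmem (Sum.inr.inj hveq ▸ hv)
            have hukocc : u ∉ A.kocc := fun hc => hmem (Finset.mem_union_left _ hc)
            refine rule1 _ _ h (closed_neg_just _ _ _) ?_
            intro S hS
            rw [heq] at hS
            exact TabRule.exp u hS (xpar_image_inr _) hnotin hukocc
    exact hA (claim3 B.kocc h2)
end

section
/- Suppose Γ is an E-complete maximally tableau FOLP_CS-consistent set of closed Par-formulas, and let E be defined by E(t) = { A : ¬t:_{Par(A)} A ∉ Γ }. Then E satisfies the Instantiation Condition E6: if A(x) ∈ E(t) and u is any parameter, then A(u) ∈ E(t), where A(u) is the result of substituting u for the free individual variable x in A(x). -/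
open scoped Classical

section Aux

variable {K K' K'' : Type}

lemma sum_map_id_comp (f : K → K') (g : K' → K'') :
    (Sum.map id g ∘ Sum.map id f : ℕ ⊕ K → ℕ ⊕ K'') = Sum.map id (g ∘ f) := by
  funext a; cases a <;> simp

lemma Fm.kmap_kmap_s13 (f : K → K') (g : K' → K'') (A : Fm K) :
    (A.kmap f).kmap g = A.kmap (g ∘ f) := by
  induction A with
  | pred Q args => simp [Fm.kmap, List.map_map, sum_map_id_comp]
  | neg A ih => simp [Fm.kmap, ih]
  | imp A B ihA ihB => simp [Fm.kmap, ihA, ihB]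
  | all x A ih => simp [Fm.kmap, ih]
  | ex x A ih => simp [Fm.kmap, ih]
  | just t X A ih => simp [Fm.kmap, ih, Finset.image_image, sum_map_id_comp]

lemma Fm.kmap_id (A : Fm K) : A.kmap id = A := by
  induction A with
  | pred Q args => simp [Fm.kmap, Sum.map_id_id]
  | neg A ih => simp [Fm.kmap, ih]
  | imp A B ihA ihB => simp [Fm.kmap, ihA, ihB]
  | all x A ih => simp [Fm.kmap, ih]
  | ex x A ih => simp [Fm.kmap, ih]
  | just t X A ih => simp [Fm.kmap, ih, Sum.map_id_id]

lemma kmap_toK (f : ℕ → ℕ) (A : Fm Empty) : (toK A : Fm ℕ).kmap f = toK A := by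
  unfold toK
  rw [Fm.kmap_kmap_s13]
  congr 1
  funext a
  exact a.elim

lemma mem_inl_image_map {f : K → K'} {X : Finset (ℕ ⊕ K)} {y : ℕ} :
    Sum.inl y ∈ X.image (Sum.map id f) ↔ Sum.inl y ∈ X := by
  simp only [Finset.mem_image]
  constructor
  · rintro ⟨s, hs, he⟩
    cases s with
    | inl z =>
        simp only [Sum.map, id] at he
        cases he
        exact hs
    | inr b => simp [Sum.map] at he
  · intro h; exact ⟨Sum.inl y, h, rfl⟩

lemma mem_inr_image_map {f : K → K'} {X : Finset (ℕ ⊕ K)} {v : K'} :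
    Sum.inr v ∈ X.image (Sum.map id f) ↔ ∃ w, Sum.inr w ∈ X ∧ f w = v := by
  simp only [Finset.mem_image]
  constructor
  · rintro ⟨s, hs, he⟩
    cases s with
    | inl z => simp [Sum.map] at he
    | inr b =>
        simp only [Sum.map] at he
        cases he
        exact ⟨b, hs, rfl⟩
  · rintro ⟨w, hw, rfl⟩; exact ⟨Sum.inr w, hw, rfl⟩

lemma subK_map_comm (f : K → K') (σ : ℕ → Option K) :
    (Sum.map id f ∘ Fm.subK σ : ℕ ⊕ K → ℕ ⊕ K') =
      Fm.subK (fun y => (σ y).map f) ∘ Sum.map id f := by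
  funext a
  cases a with
  | inl x =>
      cases h : σ x with
      | none => simp [Fm.subK, h, Sum.map]
      | some b => simp [Fm.subK, h, Sum.map]
  | inr b => simp [Fm.subK, Sum.map]

lemma Fm.kmap_msubst_s13 (f : K → K') (σ : ℕ → Option K) (A : Fm K) :
    (A.msubst σ).kmap f = (A.kmap f).msubst (fun y => (σ y).map f) := by
  induction A generalizing σ with
  | pred Q args =>
      simp only [Fm.msubst, Fm.kmap, List.map_map, subK_map_comm]
  | neg A ih => simp [Fm.msubst, Fm.kmap, ih]
  | imp A B ihA ihB => simp [Fm.msubst, Fm.kmap, ihA, ihB]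
  | all x A ih =>
      simp only [Fm.msubst, Fm.kmap, ih]
      rw [show (fun y => Option.map f (if y = x then none else σ y))
          = (fun y => if y = x then none else Option.map f (σ y)) from
        funext fun y => by split_ifs <;> rfl]
  | ex x A ih =>
      simp only [Fm.msubst, Fm.kmap, ih]
      rw [show (fun y => Option.map f (if y = x then none else σ y))
          = (fun y => if y = x then none else Option.map f (σ y)) from
        funext fun y => by split_ifs <;> rfl]
  | just t X A ih =>
      simp only [Fm.msubst, Fm.kmap, ih, Finset.image_image, subK_map_comm]
      rw [show (fun y => Option.map f (if Sum.inl y ∈ X then σ y else none))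
          = (fun y => if Sum.inl y ∈ X.image (Sum.map id f) then Option.map f (σ y) else none) from
        funext fun y => by
          by_cases h : Sum.inl y ∈ X
          · rw [if_pos h, if_pos (mem_inl_image_map.mpr h)]
          · rw [if_neg h, if_neg (fun hh => h (mem_inl_image_map.mp hh))]; rfl]

lemma Fm.kmap_subst1_s13 (f : K → K') (x : ℕ) (a : K) (A : Fm K) :
    (A.subst1 x a).kmap f = (A.kmap f).subst1 x (f a) := by
  unfold Fm.subst1
  rw [Fm.kmap_msubst_s13]
  congr 1
  funext y
  split_ifs <;> rfl

lemma mem_lefts {X : Finset (ℕ ⊕ K)} {y : ℕ} :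
    y ∈ (X.toList.filterMap Sum.getLeft?).toFinset ↔ Sum.inl y ∈ X := by
  simp only [List.mem_toFinset, List.mem_filterMap, Finset.mem_toList]
  constructor
  · rintro ⟨s, hs, he⟩
    cases s with
    | inl z => simp only [Sum.getLeft?, Option.some.injEq] at he; exact he ▸ hs
    | inr b => simp [Sum.getLeft?] at he
  · intro h; exact ⟨_, h, rfl⟩

lemma mem_rights {X : Finset (ℕ ⊕ K)} {v : K} :
    v ∈ (X.toList.filterMap Sum.getRight?).toFinset ↔ Sum.inr v ∈ X := by
  simp only [List.mem_toFinset, List.mem_filterMap, Finset.mem_toList]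
  constructor
  · rintro ⟨s, hs, he⟩
    cases s with
    | inl z => simp [Sum.getRight?] at he
    | inr b => simp only [Sum.getRight?, Option.some.injEq] at he; exact he ▸ hs
  · intro h; exact ⟨_, h, rfl⟩

lemma Fm.fvar_kmap_s13 (f : K → K') (A : Fm K) : (A.kmap f).fvar = A.fvar := by
  induction A with
  | pred Q args =>
      simp only [Fm.kmap, Fm.fvar, List.filterMap_map]
      rw [show (Sum.getLeft? ∘ Sum.map id f : ℕ ⊕ K → Option ℕ) = Sum.getLeft? from
        funext fun a => by cases a <;> rfl]
  | neg A ih => simpa [Fm.kmap, Fm.fvar] using ih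
  | imp A B ihA ihB => simp [Fm.kmap, Fm.fvar, ihA, ihB]
  | all x A ih => simp [Fm.kmap, Fm.fvar, ih]
  | ex x A ih => simp [Fm.kmap, Fm.fvar, ih]
  | just t X A ih =>
      simp only [Fm.kmap, Fm.fvar]
      ext y
      rw [mem_lefts, mem_lefts, mem_inl_image_map]

lemma Fm.kocc_kmap_s13 (f : K → K') (A : Fm K) : (A.kmap f).kocc = A.kocc.image f := by
  induction A with
  | pred Q args =>
      simp only [Fm.kmap, Fm.kocc, List.filterMap_map]
      rw [show (Sum.getRight? ∘ Sum.map id f : ℕ ⊕ K → Option K') =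
            fun a => (Sum.getRight? a).map f from funext fun a => by cases a <;> rfl]
      rw [← List.map_filterMap]
      ext v
      simp
  | neg A ih => simpa [Fm.kmap, Fm.kocc] using ih
  | imp A B ihA ihB => simp [Fm.kmap, Fm.kocc, ihA, ihB, Finset.image_union]
  | all x A ih => simpa [Fm.kmap, Fm.kocc] using ih
  | ex x A ih => simpa [Fm.kmap, Fm.kocc] using ih
  | just t X A ih =>
      simp only [Fm.kmap, Fm.kocc]
      ext v
      simp only [Finset.mem_union, ih, Finset.mem_image, mem_rights]
      constructor
      · rintro (⟨w, hw, rfl⟩ | ⟨s, hs, he⟩)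
        · exact ⟨w, Or.inl hw, rfl⟩
        · cases s with
          | inl z => simp at he
          | inr b =>
              simp only [Sum.map_inr, Sum.inr.injEq] at he
              exact ⟨b, Or.inr hs, he⟩
      · rintro ⟨w, hw | hw, rfl⟩
        · exact Or.inl ⟨w, hw, rfl⟩
        · exact Or.inr ⟨Sum.inr w, hw, by simp⟩

lemma Fm.kmap_congr {f g : K → K'} (A : Fm K) (h : ∀ a ∈ A.kocc, f a = g a) :
    A.kmap f = A.kmap g := by
  induction A with
  | pred Q args =>
      simp only [Fm.kmap]
      congr 1
      refine List.map_congr_left fun a ha => ?_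
      cases a with
      | inl z => rfl
      | inr b =>
          have hb : b ∈ (Fm.pred Q args : Fm K).kocc := by
            simp only [Fm.kocc, List.mem_toFinset, List.mem_filterMap]
            exact ⟨Sum.inr b, ha, rfl⟩
          simp [Sum.map, h b hb]
  | neg A ih => simp only [Fm.kmap]; rw [ih h]
  | imp A B ihA ihB =>
      simp only [Fm.kmap]
      rw [ihA fun a ha => h a (Finset.mem_union_left _ ha),
        ihB fun a ha => h a (Finset.mem_union_right _ ha)]
  | all x A ih => simp only [Fm.kmap]; rw [ih h]
  | ex x A ih => simp only [Fm.kmap]; rw [ih h]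
  | just t X A ih =>
      simp only [Fm.kmap]
      rw [ih fun a ha => h a (Finset.mem_union_left _ ha)]
      congr 1
      refine Finset.image_congr fun s hs => ?_
      cases s with
      | inl z => rfl
      | inr b =>
          have hb : b ∈ (Fm.just t X A).kocc :=
            Finset.mem_union_right _ (mem_rights.mpr hs)
          simp [Sum.map, h b hb]

lemma kmap_foldr_all (f : K → K') (l : List ℕ) (A : Fm K) :
    (l.foldr Fm.all A).kmap f = l.foldr Fm.all (A.kmap f) := by
  induction l with
  | nil => rfl
  | cons z l ih => simp [Fm.kmap, ih]

lemma Fm.kmap_univClosure_s13 (f : K → K') (A : Fm K) :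
    A.univClosure.kmap f = (A.kmap f).univClosure := by
  unfold Fm.univClosure
  rw [Fm.fvar_kmap_s13, kmap_foldr_all]

lemma Fm.kocc_subset_msubst (σ : ℕ → Option K) (A : Fm K) :
    A.kocc ⊆ (A.msubst σ).kocc := by
  induction A generalizing σ with
  | pred Q args =>
      intro v hv
      simp only [Fm.kocc, Fm.msubst, List.mem_toFinset, List.mem_filterMap,
        List.mem_map] at hv ⊢
      obtain ⟨s, hs, he⟩ := hv
      cases s with
      | inl z => simp [Sum.getRight?] at he
      | inr b =>
          simp only [Sum.getRight?, Option.some.injEq] at he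
          exact ⟨Sum.inr b, ⟨Sum.inr b, hs, rfl⟩, by simpa using he⟩
  | neg A ih => exact ih σ
  | imp A B ihA ihB =>
      simp only [Fm.msubst, Fm.kocc]
      exact Finset.union_subset_union (ihA σ) (ihB σ)
  | all x A ih => exact ih _
  | ex x A ih => exact ih _
  | just t X A ih =>
      simp only [Fm.msubst, Fm.kocc]
      intro v hv
      rcases Finset.mem_union.mp hv with h | h
      · exact Finset.mem_union_left _ (ih _ h)
      · refine Finset.mem_union_right _ (mem_rights.mpr ?_)
        have := mem_rights.mp h
        exact Finset.mem_image.mpr ⟨Sum.inr v, this, rfl⟩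

lemma Fm.kocc_msubst_cases (σ : ℕ → Option K) (A : Fm K) :
    ∀ v ∈ (A.msubst σ).kocc, v ∈ A.kocc ∨ ∃ y, σ y = some v := by
  induction A generalizing σ with
  | pred Q args =>
      intro v hv
      simp only [Fm.msubst, Fm.kocc, List.mem_toFinset, List.mem_filterMap,
        List.mem_map] at hv
      obtain ⟨s, ⟨a, ha, rfl⟩, he⟩ := hv
      cases a with
      | inl z =>
          cases hz : σ z with
          | none => simp [Fm.subK, hz, Sum.getRight?] at he
          | some b =>
              simp only [Fm.subK, hz, Option.elim, Sum.getRight?, Option.some.injEq] at he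
              exact Or.inr ⟨z, by rw [hz, he]⟩
      | inr b =>
          simp only [Fm.subK, Sum.getRight?, Option.some.injEq] at he
          refine Or.inl ?_
          simp only [Fm.kocc, List.mem_toFinset, List.mem_filterMap]
          exact ⟨Sum.inr b, ha, by simpa using he⟩
  | neg A ih => exact ih σ
  | imp A B ihA ihB =>
      intro v hv
      rcases Finset.mem_union.mp hv with h | h
      · rcases ihA σ v h with h' | h'
        · exact Or.inl (Finset.mem_union_left _ h')
        · exact Or.inr h'
      · rcases ihB σ v h with h' | h'
        · exact Or.inl (Finset.mem_union_right _ h')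
        · exact Or.inr h'
  | all x A ih =>
      intro v hv
      rcases ih _ v hv with h | ⟨y, hy⟩
      · exact Or.inl h
      · by_cases hyx : y = x
        · simp [hyx] at hy
        · exact Or.inr ⟨y, by simpa [hyx] using hy⟩
  | ex x A ih =>
      intro v hv
      rcases ih _ v hv with h | ⟨y, hy⟩
      · exact Or.inl h
      · by_cases hyx : y = x
        · simp [hyx] at hy
        · exact Or.inr ⟨y, by simpa [hyx] using hy⟩
  | just t X A ih =>
      intro v hv
      rcases Finset.mem_union.mp hv with h | h
      · rcases ih _ v h with h' | ⟨y, hy⟩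
        · exact Or.inl (Finset.mem_union_left _ h')
        · by_cases hm : Sum.inl y ∈ X
          · exact Or.inr ⟨y, by simpa [hm] using hy⟩
          · simp [hm] at hy
      · have := mem_rights.mp h
        rcases Finset.mem_image.mp this with ⟨s, hs, he⟩
        cases s with
        | inl z =>
            cases hz : σ z with
            | none => simp [Fm.subK, hz] at he
            | some b =>
                simp only [Fm.subK, hz, Option.elim, Sum.inr.injEq] at he
                exact Or.inr ⟨z, by rw [hz, he]⟩
        | inr b =>
            simp only [Fm.subK, Sum.inr.injEq] at he
            exact Or.inl (Finset.mem_union_right _ (mem_rights.mpr (he ▸ hs)))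

lemma Fm.mem_kocc_kmap {f : K → K'} {A : Fm K} {v : K'} :
    v ∈ (A.kmap f).kocc ↔ ∃ w ∈ A.kocc, f w = v := by
  rw [Fm.kocc_kmap_s13]
  exact Finset.mem_image

end Aux
section Aux2

lemma Fm.kmap_perm_swap {π : Equiv.Perm ℕ} {u u' : ℕ} {F : Fm ℕ}
    (h1 : u ∉ F.kocc) (h2 : u' ∉ (F.kmap π).kocc) :
    F.kmap (π.trans (Equiv.swap (π u) u')) = F.kmap π := by
  apply Fm.kmap_congr
  intro a ha
  have hne1 : π a ≠ π u := fun h => h1 (π.injective h ▸ ha)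
  have hne2 : π a ≠ u' := by
    intro h
    exact h2 (Fm.mem_kocc_kmap.mpr ⟨a, ha, h⟩)
  simp [Equiv.trans_apply, Equiv.swap_apply_of_ne_of_ne hne1 hne2]

lemma xpar_image {inst : DecidableEq (ℕ ⊕ ℕ)} (f : ℕ → ℕ) {X : Finset (ℕ ⊕ ℕ)} (h : XPar X) :
    XPar (@Finset.image _ _ inst (Sum.map id f) X) := by
  intro s hs
  rcases (@Finset.mem_image _ _ inst _ _ _).mp hs with ⟨a, ha, rfl⟩
  rcases h a ha with ⟨v, rfl⟩
  exact ⟨f v, rfl⟩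

lemma inr_not_mem_image {inst : DecidableEq (ℕ ⊕ ℕ)} {f : ℕ → ℕ} (hf : Function.Injective f)
    {X : Finset (ℕ ⊕ ℕ)} {u : ℕ} (h : Sum.inr u ∉ X) :
    Sum.inr (f u) ∉ @Finset.image _ _ inst (Sum.map id f) X := by
  intro hmem
  rcases (@Finset.mem_image _ _ inst _ _ _).mp hmem with ⟨s, hs, he⟩
  cases s with
  | inl z => simp at he
  | inr w =>
      simp only [Sum.map_inr, Sum.inr.injEq] at he
      exact h (hf he ▸ hs)

lemma xpar_inr_image {inst : DecidableEq (ℕ ⊕ ℕ)} (k : Finset ℕ) :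
    XPar (@Finset.image _ _ inst Sum.inr k) := by
  intro s hs
  rcases (@Finset.mem_image _ _ inst _ _ _).mp hs with ⟨a, _, rfl⟩
  exact ⟨a, rfl⟩

lemma exists_fresh {T : Set (Fm ℕ)} (hT : T.Finite) : ∃ u, ∀ F ∈ T, u ∉ F.kocc := by
  have h : (⋃ F ∈ T, (F.kocc : Set ℕ)).Finite :=
    hT.biUnion fun F _ => F.kocc.finite_toSet
  obtain ⟨u, hu⟩ := h.infinite_compl.nonempty
  exact ⟨u, fun F hF hmem => hu (Set.mem_biUnion hF (by exact_mod_cast hmem))⟩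

lemma insert_push {f : ℕ → ℕ} {S T : Set (Fm ℕ)}
    (hsub : ∀ F ∈ S, F.kmap f ∈ T) (A : Fm ℕ) :
    ∀ F ∈ insert A S, F.kmap f ∈ insert (A.kmap f) T := by
  rintro F (rfl | hF)
  · exact Set.mem_insert _ _
  · exact Set.mem_insert_of_mem _ (hsub F hF)

theorem ClosedTableau.rename_mono {CS : Set (ℕ × Fm Empty)} {S : Set (Fm ℕ)}
    (h : ClosedTableau CS S) :
    ∀ (π : Equiv.Perm ℕ) (T : Set (Fm ℕ)),
      (∀ F ∈ S, F.kmap π ∈ T) → T.Finite → ClosedTableau CS T := by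
  induction h with
  | close hA hnA =>
      intro π T hsub _
      exact ClosedTableau.close (hsub _ hA) (by simpa [Fm.kmap] using hsub _ hnA)
  | closeCS hcs hmem =>
      intro π T hsub _
      exact ClosedTableau.closeCS hcs (by simpa [Fm.kmap, kmap_toK] using hsub _ hmem)
  | step hrule _ ih =>
      intro π T hsub hT
      cases hrule with
      | @fneg A hmem =>
          refine ClosedTableau.step (TabRule.fneg (A := A.kmap π)
            (by simpa [Fm.kmap] using hsub _ hmem)) ?_
          intro S' hS'
          simp only [List.mem_singleton] at hS'
          subst hS'
          exact ih _ (List.mem_singleton_self _) π _ (insert_push hsub A) (hT.insert _)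
      | @timp A B hmem =>
          refine ClosedTableau.step (TabRule.timp (A := A.kmap π) (B := B.kmap π)
            (by simpa [Fm.kmap] using hsub _ hmem)) ?_
          intro S' hS'
          simp only [List.mem_cons, List.not_mem_nil, or_false] at hS'
          rcases hS' with rfl | rfl
          · exact ih _ List.mem_cons_self π _
              (by simpa [Fm.kmap] using insert_push hsub (Fm.neg A)) (hT.insert _)
          · exact ih _ (List.mem_cons_of_mem _ (List.mem_singleton_self _)) π _
              (insert_push hsub B) (hT.insert _)
      | @fimp A B hmem =>
          refine ClosedTableau.step (TabRule.fimp (A := A.kmap π) (B := B.kmap π)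
            (by simpa [Fm.kmap] using hsub _ hmem)) ?_
          intro S' hS'
          simp only [List.mem_singleton] at hS'
          subst hS'
          refine ih _ (List.mem_singleton_self _) π _ ?_ ((hT.insert _).insert _)
          have h1 := insert_push (f := ⇑π) hsub (Fm.neg B)
          have h2 := insert_push (f := ⇑π) h1 A
          simpa [Fm.kmap] using h2
      | @tall x A u hmem =>
          refine ClosedTableau.step (TabRule.tall (A := A.kmap π) (π u)
            (by simpa [Fm.kmap] using hsub _ hmem)) ?_
          intro S' hS'
          simp only [List.mem_singleton] at hS'
          subst hS'
          refine ih _ (List.mem_singleton_self _) π _ ?_ (hT.insert _)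
          have := insert_push (f := ⇑π) hsub (A.subst1 x u)
          simpa [Fm.kmap_subst1_s13] using this
      | @fex x A u hmem =>
          refine ClosedTableau.step (TabRule.fex (A := A.kmap π) (π u)
            (by simpa [Fm.kmap] using hsub _ hmem)) ?_
          intro S' hS'
          simp only [List.mem_singleton] at hS'
          subst hS'
          refine ih _ (List.mem_singleton_self _) π _ ?_ (hT.insert _)
          have := insert_push (f := ⇑π) hsub (Fm.neg (A.subst1 x u))
          simpa [Fm.kmap, Fm.kmap_subst1_s13] using this
      | @tex x A u hmem hfresh =>
          obtain ⟨u', hu'⟩ := exists_fresh hT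
          have hmemT : Fm.ex x (A.kmap π) ∈ T := by simpa [Fm.kmap] using hsub _ hmem
          refine ClosedTableau.step (TabRule.tex u' hmemT hu') ?_
          intro S' hS'
          simp only [List.mem_singleton] at hS'
          subst hS'
          have hagree := fun F hF =>
            Fm.kmap_perm_swap (π := π) (u := u) (u' := u') (hfresh F hF)
              (fun hc => hu' _ (hsub F hF) hc)
          have hA : A.kmap (π.trans (Equiv.swap (π u) u')) = A.kmap π := by
            have := hagree _ hmem
            simpa [Fm.kmap] using this
          refine ih _ (List.mem_singleton_self _) (π.trans (Equiv.swap (π u) u')) _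
            ?_ (hT.insert _)
          rintro F (rfl | hF)
          · have : (A.subst1 x u).kmap (π.trans (Equiv.swap (π u) u'))
                = (A.kmap π).subst1 x u' := by
              rw [Fm.kmap_subst1_s13, hA]
              congr 1
              simp [Equiv.trans_apply]
            exact this ▸ Set.mem_insert _ _
          · exact Set.mem_insert_of_mem _ (hagree F hF ▸ hsub F hF)
      | @fall x A u hmem hfresh =>
          obtain ⟨u', hu'⟩ := exists_fresh hT
          have hmemT : Fm.neg (Fm.all x (A.kmap π)) ∈ T := by
            simpa [Fm.kmap] using hsub _ hmem
          refine ClosedTableau.step (TabRule.fall u' hmemT hu') ?_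
          intro S' hS'
          simp only [List.mem_singleton] at hS'
          subst hS'
          have hagree := fun F hF =>
            Fm.kmap_perm_swap (π := π) (u := u) (u' := u') (hfresh F hF)
              (fun hc => hu' _ (hsub F hF) hc)
          have hA : A.kmap (π.trans (Equiv.swap (π u) u')) = A.kmap π := by
            have := hagree _ hmem
            simpa [Fm.kmap] using this
          refine ih _ (List.mem_singleton_self _) (π.trans (Equiv.swap (π u) u')) _
            ?_ (hT.insert _)
          rintro F (rfl | hF)
          · have : (Fm.neg (A.subst1 x u)).kmap (π.trans (Equiv.swap (π u) u'))
                = Fm.neg ((A.kmap π).subst1 x u') := by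
              simp only [Fm.kmap, Fm.kmap_subst1_s13, hA]
              congr 2
              simp [Equiv.trans_apply]
            exact this ▸ Set.mem_insert _ _
          · exact Set.mem_insert_of_mem _ (hagree F hF ▸ hsub F hF)
      | @tcolon t X A hmem hX =>
          refine ClosedTableau.step (TabRule.tcolon
            (by simpa [Fm.kmap] using hsub _ hmem : Fm.just t _ (A.kmap π) ∈ T)
            (xpar_image _ hX)) ?_
          intro S' hS'
          simp only [List.mem_singleton] at hS'
          subst hS'
          refine ih _ (List.mem_singleton_self _) π _ ?_ (hT.insert _)
          have := insert_push (f := ⇑π) hsub A.univClosure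
          simpa [Fm.kmap_univClosure_s13] using this
      | @fplus t s X A hmem hX =>
          refine ClosedTableau.step (TabRule.fplus
            (by simpa [Fm.kmap] using hsub _ hmem :
              Fm.neg (Fm.just (Tm.plus t s) _ (A.kmap π)) ∈ T)
            (xpar_image _ hX)) ?_
          intro S' hS'
          simp only [List.mem_singleton] at hS'
          subst hS'
          refine ih _ (List.mem_singleton_self _) π _ ?_ ((hT.insert _).insert _)
          have h1 := insert_push (f := ⇑π) hsub (Fm.neg (Fm.just s X A))
          have h2 := insert_push (f := ⇑π) h1 (Fm.neg (Fm.just t X A))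
          simpa [Fm.kmap] using h2
      | @fapp s t X B A hmem hX hocc =>
          refine ClosedTableau.step (TabRule.fapp (A.kmap π)
            (by simpa [Fm.kmap] using hsub _ hmem :
              Fm.neg (Fm.just (Tm.app s t) _ (B.kmap π)) ∈ T)
            (xpar_image _ hX) ?_) ?_
          · intro v hv
            rcases Fm.mem_kocc_kmap.mp hv with ⟨w, hw, rfl⟩
            exact mem_inr_image_map.mpr ⟨w, hocc w hw, rfl⟩
          · intro S' hS'
            simp only [List.mem_cons, List.not_mem_nil, or_false] at hS'
            rcases hS' with rfl | rfl
            · refine ih _ List.mem_cons_self π _ ?_ (hT.insert _)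
              have := insert_push (f := ⇑π) hsub (Fm.neg (Fm.just s X (A.imp B)))
              simpa [Fm.kmap] using this
            · refine ih _ (List.mem_cons_of_mem _ (List.mem_singleton_self _)) π _
                ?_ (hT.insert _)
              have := insert_push (f := ⇑π) hsub (Fm.neg (Fm.just t X A))
              simpa [Fm.kmap] using this
      | @fbang t X A hmem hX =>
          refine ClosedTableau.step (TabRule.fbang
            (by simpa [Fm.kmap] using hsub _ hmem :
              Fm.neg (Fm.just (Tm.bang t) _ (Fm.just t _ (A.kmap π))) ∈ T)
            (xpar_image _ hX)) ?_
          intro S' hS'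
          simp only [List.mem_singleton] at hS'
          subst hS'
          refine ih _ (List.mem_singleton_self _) π _ ?_ (hT.insert _)
          have := insert_push (f := ⇑π) hsub (Fm.neg (Fm.just t X A))
          simpa [Fm.kmap] using this
      | @ctr t X A u hmem hX hu =>
          refine ClosedTableau.step (TabRule.ctr (π u)
            (by simpa [Fm.kmap] using hsub _ hmem :
              Fm.neg (Fm.just t _ (A.kmap π)) ∈ T)
            (xpar_image _ hX) (inr_not_mem_image π.injective hu)) ?_
          intro S' hS'
          simp only [List.mem_singleton] at hS'
          subst hS'
          refine ih _ (List.mem_singleton_self _) π _ ?_ (hT.insert _)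
          rintro F (rfl | hF)
          · refine Set.mem_insert_iff.mpr (Or.inl ?_)
            simp only [Fm.kmap]
            congr 1
            congr 1
            ext s
            simp only [Finset.mem_image, Finset.mem_insert]
            constructor
            · rintro ⟨a, ha | ha, rfl⟩
              · subst ha
                exact Or.inl (by simp)
              · exact Or.inr ⟨a, ha, rfl⟩
            · rintro (rfl | ⟨a, ha, rfl⟩)
              · exact ⟨Sum.inr u, Or.inl rfl, by simp⟩
              · exact ⟨a, Or.inr ha, rfl⟩
          · exact Set.mem_insert_of_mem _ (hsub F hF)
      | @exp t X A u hmem hX hu hk =>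
          have heq : (Fm.neg (Fm.just t (insert (Sum.inr u) X) A)).kmap ⇑π
              = Fm.neg (Fm.just t (insert (Sum.inr (π u)) (X.image (Sum.map id ⇑π)))
                  (A.kmap ⇑π)) := by
            simp only [Fm.kmap]
            congr 1
            congr 1
            ext s
            simp only [Finset.mem_image, Finset.mem_insert]
            constructor
            · rintro ⟨a, ha | ha, rfl⟩
              · subst ha
                exact Or.inl (by simp)
              · exact Or.inr ⟨a, ha, rfl⟩
            · rintro (rfl | ⟨a, ha, rfl⟩)
              · exact ⟨Sum.inr u, Or.inl rfl, by simp⟩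
              · exact ⟨a, Or.inr ha, rfl⟩
          have hmemT := hsub _ hmem
          rw [heq] at hmemT
          refine ClosedTableau.step (TabRule.exp (π u) hmemT
            (xpar_image _ hX) (inr_not_mem_image π.injective hu) ?_) ?_
          · intro hc
            rcases Fm.mem_kocc_kmap.mp hc with ⟨w, hw, he⟩
            exact hk (π.injective he ▸ hw)
          · intro S' hS'
            simp only [List.mem_singleton] at hS'
            subst hS'
            refine ih _ (List.mem_singleton_self _) π _ ?_ (hT.insert _)
            rintro F (rfl | hF)
            · refine Set.mem_insert_iff.mpr (Or.inl ?_)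
              simp only [Fm.kmap]
              congr 1
              congr 1
              ext s
              simp [Finset.mem_image]
            · exact Set.mem_insert_of_mem _ (hsub F hF)
      | @ins t X A x u hmem hX =>
          refine ClosedTableau.step (TabRule.ins x (π u)
            (by simpa [Fm.kmap, Fm.kmap_subst1_s13] using hsub _ hmem :
              Fm.neg (Fm.just t _ ((A.kmap π).subst1 x (π u))) ∈ T)
            (xpar_image _ hX)) ?_
          intro S' hS'
          simp only [List.mem_singleton] at hS'
          subst hS'
          refine ih _ (List.mem_singleton_self _) π _ ?_ (hT.insert _)
          have := insert_push (f := ⇑π) hsub (Fm.neg (Fm.just t X A))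
          simpa [Fm.kmap] using this
      | @genx t X A x hmem hX =>
          refine ClosedTableau.step (TabRule.genx
            (by simpa [Fm.kmap] using hsub _ hmem :
              Fm.neg (Fm.just (Tm.gen x t) _ (Fm.all x (A.kmap π))) ∈ T)
            (xpar_image _ hX)) ?_
          intro S' hS'
          simp only [List.mem_singleton] at hS'
          subst hS'
          refine ih _ (List.mem_singleton_self _) π _ ?_ (hT.insert _)
          have := insert_push (f := ⇑π) hsub (Fm.neg (Fm.just t X A))
          simpa [Fm.kmap] using this

end Aux2
/-- the Instantiation Condition E6 for the canonical evidence
function `E(t) = {A | ¬t:_{Par(A)} A ∉ Γ}`:  if `A(x) ∈ E(t)` and `u` is any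
parameter then `A(u) ∈ E(t)`. -/
theorem canonical_E6
    (CS : Set (ℕ × Fm Empty)) (hCS : ConstantSpec CS)
    (Γ : Set (Fm ℕ)) (hclosed : ∀ F ∈ Γ, F.Closed)
    (hmax : MaximalCons CS Γ) (hE : EComplete Γ)
    (t : Tm) (A : Fm ℕ) (x u : ℕ)
    (hA : A ∈ canE Γ t) :
    A.subst1 x u ∈ canE Γ t := by

  simp only [canE, Set.mem_setOf_eq] at hA ⊢
  intro hH
  -- notation
  have hGclosed : (Fm.neg (Fm.just t (A.kocc.image Sum.inr) A)).Closed := by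
    simp only [Fm.Closed, Fm.fvar]
    refine Finset.eq_empty_iff_forall_notMem.mpr fun y hy => ?_
    rcases Finset.mem_image.mp (mem_lefts.mp hy) with ⟨a, _, h⟩
    simp at h
  have hnc : ¬ TabConsistent CS (insert (Fm.neg (Fm.just t (A.kocc.image Sum.inr) A)) Γ) := by
    intro hc
    have hcl : ∀ F ∈ insert (Fm.neg (Fm.just t (A.kocc.image Sum.inr) A)) Γ, F.Closed := by
      rintro F (rfl | hF)
      · exact hGclosed
      · exact hclosed F hF
    have := hmax.2 _ (Set.subset_insert _ _) hcl hc
    exact hA (this ▸ Set.mem_insert _ Γ)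
  rw [TabConsistent] at hnc
  push_neg at hnc
  obtain ⟨S, hSsub, hSfin, hStab⟩ := hnc
  have hS₀sub : insert (Fm.neg (Fm.just t ((A.subst1 x u).kocc.image Sum.inr) (A.subst1 x u)))
      (S \ {Fm.neg (Fm.just t (A.kocc.image Sum.inr) A)}) ⊆ Γ := by
    rintro F (rfl | ⟨hF, hne⟩)
    · exact hH
    · rcases Set.mem_insert_iff.mp (hSsub hF) with rfl | h
      · exact absurd rfl hne
      · exact h
  have hS₀fin : (insert (Fm.neg (Fm.just t ((A.subst1 x u).kocc.image Sum.inr) (A.subst1 x u)))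
      (S \ {Fm.neg (Fm.just t (A.kocc.image Sum.inr) A)})).Finite := (hSfin.diff).insert _
  have hweak : ∀ W : Set (Fm ℕ), S ⊆ W → W.Finite → ClosedTableau CS W := by
    intro W hsw hwf
    refine hStab.rename_mono (Equiv.refl ℕ) W (fun F hF => ?_) hwf
    simpa [Equiv.coe_refl, Fm.kmap_id] using hsw hF
  have h1 : A.kocc ⊆ (A.subst1 x u).kocc := Fm.kocc_subset_msubst _ _
  have h2 : ∀ v ∈ (A.subst1 x u).kocc, v ∈ A.kocc ∨ v = u := by
    intro v hv
    rcases Fm.kocc_msubst_cases _ _ v hv with h | ⟨y, hy⟩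
    · exact Or.inl h
    · right
      by_cases hyx : y = x
      · subst hyx
        simp at hy
        omega
      · simp [hyx] at hy
  refine hmax.1 _ hS₀sub hS₀fin ?_
  have hHmem : Fm.neg (Fm.just t ((A.subst1 x u).kocc.image Sum.inr) (A.subst1 x u)) ∈
      insert (Fm.neg (Fm.just t ((A.subst1 x u).kocc.image Sum.inr) (A.subst1 x u)))
        (S \ {Fm.neg (Fm.just t (A.kocc.image Sum.inr) A)}) := Set.mem_insert _ _
  by_cases hcase : u ∈ (A.subst1 x u).kocc ∧ u ∉ A.kocc
  · -- Par(A(u)) = Par(A) ∪ {u}: use (Ins) then (Exp)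
    have hkeq : (A.subst1 x u).kocc = insert u A.kocc := by
      refine Finset.Subset.antisymm (fun v hv => ?_) (Finset.insert_subset hcase.1 h1)
      rcases h2 v hv with h | rfl
      · exact Finset.mem_insert_of_mem h
      · exact Finset.mem_insert_self _ _
    refine ClosedTableau.step (TabRule.ins x u hHmem (xpar_inr_image _)) ?_
    intro S' hS'
    simp only [List.mem_singleton] at hS'
    subst hS'
    have hins : (insert (Sum.inr u) (A.kocc.image Sum.inr) : Finset (ℕ ⊕ ℕ))
        = (A.subst1 x u).kocc.image Sum.inr := by rw [hkeq, Finset.image_insert]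
    refine ClosedTableau.step (TabRule.exp (t := t) (A := A) u (X := A.kocc.image Sum.inr)
      ?_ (xpar_inr_image _) ?_ hcase.2) ?_
    · rw [hins]
      exact Set.mem_insert _ _
    · intro hc
      rcases Finset.mem_image.mp hc with ⟨a, ha, he⟩
      rw [show a = u from Sum.inr.inj he] at ha
      exact hcase.2 ha
    · intro S' hS'
      simp only [List.mem_singleton] at hS'
      subst hS'
      refine hweak _ (fun F hF => ?_) ((hS₀fin.insert _).insert _)
      by_cases hFG : F = Fm.neg (Fm.just t (A.kocc.image Sum.inr) A)
      · subst hFG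
        exact Set.mem_insert _ _
      · exact Set.mem_insert_of_mem _ (Set.mem_insert_of_mem _
          (Set.mem_insert_of_mem _ ⟨hF, hFG⟩))
  · -- Par(A(u)) = Par(A): use (Ins) only
    have hkeq : (A.subst1 x u).kocc = A.kocc := by
      refine Finset.Subset.antisymm (fun v hv => ?_) h1
      rcases h2 v hv with h | rfl
      · exact h
      · by_contra hvA
        exact hcase ⟨hv, hvA⟩
    refine ClosedTableau.step (TabRule.ins x u hHmem (xpar_inr_image _)) ?_
    intro S' hS'
    simp only [List.mem_singleton] at hS'
    subst hS'
    refine hweak _ (fun F hF => ?_) (hS₀fin.insert _)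
    by_cases hFG : F = Fm.neg (Fm.just t (A.kocc.image Sum.inr) A)
    · subst hFG
      refine Set.mem_insert_iff.mpr (Or.inl ?_)
      rw [hkeq]
    · exact Set.mem_insert_of_mem _ (Set.mem_insert_of_mem _ ⟨hF, hFG⟩)
end
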